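/- arXiv:1407.4018 — 5 statements merged into one kernel-verified Lean document; each statement's English description precedes it below -/
import Mathlib

section
/- Let X be a Banach space over ℝ or ℂ, let f: X → ℝ be a nonconstant Lipschitz function, let ε > 0, and let A ⊆ S_X. If the closed convex hull of A intersects S(S_X, f, ε), then A itself intersects S(S_X, f, ε). -/
open Set Metric Topology

/-- The Lipschitz seminorm `‖f‖ = sup { ‖f x₁ - f x₂‖ / ‖x₁ - x₂‖ : x₁ ≠ x₂ }`. -/
noncomputable def lipSemi {X Y : Type*} [NormedAddCommGroup X] [NormedAddCommGroup Y]
    (f : X → Y) : ℝ :=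
  sSup {r : ℝ | ∃ x₁ x₂ : X, x₁ ≠ x₂ ∧ r = ‖f x₁ - f x₂‖ / ‖x₁ - x₂‖}

/-- The Lip-slice `S(S_X, f, ε)` of the unit sphere generated by a Lipschitz
functional `f : X → ℝ` and `ε > 0`. -/
def lipSlice {X : Type*} [NormedAddCommGroup X] [NormedSpace ℝ X]
    (f : X → ℝ) (ε : ℝ) : Set X :=
  {z | ∃ x₁ x₂ : X, x₁ ≠ x₂ ∧ z = ‖x₁ - x₂‖⁻¹ • (x₁ - x₂) ∧
    lipSemi f - ε < (f x₁ - f x₂) / ‖x₁ - x₂‖}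

/-- `S` is a Lip-slice of the unit sphere of `X`. -/
def IsLipSlice {X : Type*} [NormedAddCommGroup X] [NormedSpace ℝ X] (S : Set X) : Prop :=
  ∃ (f : X → ℝ) (ε : ℝ), (∃ C, LipschitzWith C f) ∧ (∃ x y : X, f x ≠ f y) ∧ 0 < ε ∧
    S = lipSlice f ε

/-- A rank-one bounded linear operator: `T = g(·) • u`. -/
def RankOne (𝕜 : Type*) [RCLike 𝕜] {X : Type*} [NormedAddCommGroup X] [NormedSpace 𝕜 X]
    (T : X →L[𝕜] X) : Prop :=
  ∃ (g : X →L[𝕜] 𝕜) (u : X), ∀ x, T x = g x • u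

/-- The Daugavet property: every rank-one operator satisfies `‖Id + T‖ = 1 + ‖T‖`. -/
def DaugavetProperty (𝕜 : Type*) [RCLike 𝕜] (X : Type*) [NormedAddCommGroup X]
    [NormedSpace 𝕜 X] : Prop :=
  ∀ T : X →L[𝕜] X, RankOne 𝕜 T → ‖ContinuousLinearMap.id 𝕜 X + T‖ = 1 + ‖T‖

/-- The alternative Daugavet property: every rank-one operator satisfies
`max_{θ ∈ 𝕋} ‖Id + θT‖ = 1 + ‖T‖`. -/
def AltDaugavetProperty (𝕜 : Type*) [RCLike 𝕜] (X : Type*) [NormedAddCommGroup X]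
    [NormedSpace 𝕜 X] : Prop :=
  ∀ T : X →L[𝕜] X, RankOne 𝕜 T →
    IsGreatest {r : ℝ | ∃ θ : 𝕜, ‖θ‖ = 1 ∧ r = ‖ContinuousLinearMap.id 𝕜 X + θ • T‖}
      (1 + ‖T‖)

/-- `S` is a slice of the set `A`: a nonempty set of the form `{x ∈ A | Re f x > α}`
with `f` a nonzero continuous linear functional. -/
def IsSlice (𝕜 : Type*) [RCLike 𝕜] {X : Type*} [NormedAddCommGroup X] [NormedSpace 𝕜 X]
    (A S : Set X) : Prop :=
  S.Nonempty ∧ ∃ (f : X →L[𝕜] 𝕜) (α : ℝ), f ≠ 0 ∧ S = {x ∈ A | α < RCLike.re (f x)}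

/-- Slicely countably determined set. -/
def IsSCD (𝕜 : Type*) [RCLike 𝕜] {X : Type*} [NormedAddCommGroup X] [NormedSpace 𝕜 X]
    [NormedSpace ℝ X] (A : Set X) : Prop :=
  ∃ S : ℕ → Set X, (∀ n, IsSlice 𝕜 A (S n)) ∧
    ∀ B ⊆ A, (∀ n, (B ∩ S n).Nonempty) → A ⊆ closure (convexHull ℝ B)

/-- The slope set of a map `T : X → X`. -/
def lipSlope {X : Type*} [NormedAddCommGroup X] [NormedSpace ℝ X] (T : X → X) : Set X :=
  {z | ∃ x₁ x₂ : X, x₁ ≠ x₂ ∧ z = ‖x₁ - x₂‖⁻¹ • (T x₁ - T x₂)}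

/-- `K(X*)`: the intersection of the dual unit sphere with the weak*-closure of the
set of extreme points of the dual unit ball, as a subset of the weak* dual. -/
noncomputable def Kdual (𝕜 : Type*) [RCLike 𝕜] (X : Type*) [NormedAddCommGroup X]
    [NormedSpace 𝕜 X] : Set (WeakDual 𝕜 X) :=
  {φ | ‖WeakDual.toStrongDual φ‖ = 1} ∩
    closure (WeakDual.toStrongDual ⁻¹'
      Set.extremePoints ℝ (closedBall (0 : StrongDual 𝕜 X) 1))

/-- `D(S, ε) = {x* ∈ K(X*) : ∃ y ∈ S, Re x*(y) > 1 - ε}`. -/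
def Dset (𝕜 : Type*) [RCLike 𝕜] {X : Type*} [NormedAddCommGroup X] [NormedSpace 𝕜 X]
    (S : Set X) (ε : ℝ) : Set ↥(Kdual 𝕜 X) :=
  {φ | ∃ y ∈ S, 1 - ε < RCLike.re ((φ : WeakDual 𝕜 X) y)}

/-- `D̃(S, ε) = {x* ∈ K(X*) : ∃ y ∈ S, |x*(y)| > 1 - ε}`. -/
def DsetAbs (𝕜 : Type*) [RCLike 𝕜] {X : Type*} [NormedAddCommGroup X] [NormedSpace 𝕜 X]
    (S : Set X) (ε : ℝ) : Set ↥(Kdual 𝕜 X) :=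
  {φ | ∃ y ∈ S, 1 - ε < ‖(φ : WeakDual 𝕜 X) y‖}

/-- A set is dentable if it admits slices of arbitrarily small diameter. -/
def Dentable (𝕜 : Type*) [RCLike 𝕜] {X : Type*} [NormedAddCommGroup X] [NormedSpace 𝕜 X]
    (B : Set X) : Prop :=
  ∀ ε : ℝ, 0 < ε → ∃ S : Set X, IsSlice 𝕜 B S ∧ diam S < ε

/-- A sequence equivalent to the unit vector basis of `ℓ₁`. -/
def IsL1Seq (𝕜 : Type*) [RCLike 𝕜] {X : Type*} [NormedAddCommGroup X] [NormedSpace 𝕜 X]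
    (x : ℕ → X) : Prop :=
  ∃ C : ℝ, 1 ≤ C ∧ ∀ (n : ℕ) (a : ℕ → 𝕜),
    C⁻¹ * (∑ k ∈ Finset.range n, ‖a k‖) ≤ ‖∑ k ∈ Finset.range n, a k • x k‖ ∧
    ‖∑ k ∈ Finset.range n, a k • x k‖ ≤ C * (∑ k ∈ Finset.range n, ‖a k‖)

/-- Numerical radius of a bounded linear operator. -/
noncomputable def numRadius (𝕜 : Type*) [RCLike 𝕜] {X : Type*} [NormedAddCommGroup X]
    [NormedSpace 𝕜 X] (T : X →L[𝕜] X) : ℝ :=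
  sSup {r : ℝ | ∃ (x : X) (f : X →L[𝕜] 𝕜), ‖x‖ = 1 ∧ ‖f‖ = 1 ∧ f x = 1 ∧ r = ‖f (T x)‖}

/-- Numerical index of a Banach space. -/
noncomputable def numIndex (𝕜 : Type*) [RCLike 𝕜] (X : Type*) [NormedAddCommGroup X]
    [NormedSpace 𝕜 X] : ℝ :=
  sInf {r : ℝ | ∃ T : X →L[𝕜] X, ‖T‖ = 1 ∧ r = numRadius 𝕜 T}

/-- Numerical radius of a Lipschitz map. -/
noncomputable def lipNumRadius (𝕜 : Type*) [RCLike 𝕜] {X : Type*} [NormedAddCommGroup X]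
    [NormedSpace 𝕜 X] (T : X → X) : ℝ :=
  sSup {r : ℝ | ∃ (x y : X) (f : X →L[𝕜] 𝕜), x ≠ y ∧
    RCLike.re (f (x - y)) = ‖f‖ * ‖x - y‖ ∧ ‖f‖ * ‖x - y‖ = ‖x - y‖ ^ 2 ∧
    r = ‖f (T x - T y)‖ / ‖x - y‖ ^ 2}

/-- The Lipschitz numerical index of a Banach space. -/
noncomputable def lipNumIndex (𝕜 : Type*) [RCLike 𝕜] (X : Type*) [NormedAddCommGroup X]
    [NormedSpace 𝕜 X] : ℝ :=
  sInf {r : ℝ | ∃ T : X → X, (∃ C, LipschitzWith C T) ∧ lipSemi T = 1 ∧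
    r = lipNumRadius 𝕜 T}

/-- The slice `S(S_X, Re f, ε)` of the unit sphere given by a linear functional. -/
def sphereSlice (𝕜 : Type*) [RCLike 𝕜] {X : Type*} [NormedAddCommGroup X]
    [NormedSpace 𝕜 X] (f : X →L[𝕜] 𝕜) (ε : ℝ) : Set X :=
  {z | ‖z‖ = 1 ∧ 1 - ε < RCLike.re (f z)}

/-- `𝕋 • S`, the set of rotations of elements of `S` by unimodular scalars. -/
def circleSmul (𝕜 : Type*) [RCLike 𝕜] {X : Type*} [NormedAddCommGroup X]
    [NormedSpace 𝕜 X] (S : Set X) : Set X :=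
  {w | ∃ (θ : 𝕜) (z : X), ‖θ‖ = 1 ∧ z ∈ S ∧ w = θ • z}

/-- Lushness of a Banach space. -/
def Lush (𝕜 : Type*) [RCLike 𝕜] (X : Type*) [NormedAddCommGroup X] [NormedSpace 𝕜 X]
    [NormedSpace ℝ X] : Prop :=
  ∀ x y : X, ‖x‖ = 1 → ‖y‖ = 1 → ∀ ε : ℝ, 0 < ε → ∃ f : X →L[𝕜] 𝕜, ‖f‖ = 1 ∧
    y ∈ sphereSlice 𝕜 f ε ∧
    infDist x (convexHull ℝ (circleSmul 𝕜 (sphereSlice 𝕜 f ε))) < ε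

/-- Fundamental lemma: if the closed convex hull of a subset of the unit sphere meets a
Lip-slice, then so does the set itself. -/
theorem fundamental_lemma_lip_slices {𝕜 X : Type*} [RCLike 𝕜] [NormedAddCommGroup X] [NormedSpace 𝕜 X]
    [NormedSpace ℝ X] [IsScalarTower ℝ 𝕜 X] [CompleteSpace X]
    (f : X → ℝ) (hlip : ∃ C, LipschitzWith C f) (hnc : ∃ x y : X, f x ≠ f y)
    (ε : ℝ) (hε : 0 < ε) (A : Set X) (hA : A ⊆ sphere (0 : X) 1)
    (h : (closure (convexHull ℝ A) ∩ lipSlice f ε).Nonempty) :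
    (A ∩ lipSlice f ε).Nonempty := by
  
  by_contra hcon
  have hnot : ∀ a ∈ A, a ∉ lipSlice f ε := fun a ha hs => hcon ⟨a, ha, hs⟩
  obtain ⟨z0, hz0cl, x₁, x₂, hne, hz0eq, hslope⟩ := h
  set L : ℝ := lipSemi f with hL
  set u : X := x₁ - x₂ with hu
  have hu0 : u ≠ 0 := sub_ne_zero.mpr hne
  have hun : (0:ℝ) < ‖u‖ := norm_pos_iff.mpr hu0
  obtain ⟨C, hC⟩ := hlip
  have hgap : 0 < f x₁ - f x₂ - (L - ε) * ‖u‖ := by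
    have h1 : (L - ε) * ‖u‖ < f x₁ - f x₂ := by
      rw [lt_div_iff₀ hun] at hslope
      exact hslope
    linarith
  set gap : ℝ := f x₁ - f x₂ - (L - ε) * ‖u‖ with hgapdef
  set δ : ℝ := gap / (((C:ℝ) + 1) * ‖u‖) with hδdef
  have hCpos : (0:ℝ) < (C:ℝ) + 1 := by positivity
  have hδ : 0 < δ := div_pos hgap (by positivity)
  obtain ⟨v, hvA, hvd⟩ := Metric.mem_closure_iff.mp hz0cl δ hδ
  obtain ⟨ι, _, w, z, hw0, hw1, hzA, hvsum⟩ := mem_convexHull_iff_exists_fintype.mp hvA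
  set n : ℕ := Fintype.card ι with hn
  set e : ι ≃ Fin n := Fintype.equivFin ι with he
  set W : ℕ → ℝ := fun k => if h : k < n then w (e.symm ⟨k, h⟩) else 0 with hW
  set Z : ℕ → X := fun k => if h : k < n then z (e.symm ⟨k, h⟩) else 0 with hZ
  have hWsum : ∑ k ∈ Finset.range n, W k = 1 := by
    rw [← hw1, ← e.symm.sum_comp w, ← Fin.sum_univ_eq_sum_range]
    apply Finset.sum_congr rfl
    intro i _
    simp [hW, i.isLt]
  have hWZsum : ∑ k ∈ Finset.range n, W k • Z k = v := by
    rw [← hvsum, ← e.symm.sum_comp (fun i => w i • z i), ← Fin.sum_univ_eq_sum_range]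
    apply Finset.sum_congr rfl
    intro i _
    simp [hW, hZ, i.isLt]
  have hW0 : ∀ k, 0 ≤ W k := by
    intro k
    by_cases hk : k < n <;> simp [hW, hk]
    · exact hw0 _
  have hZA : ∀ k, k < n → Z k ∈ A := by
    intro k hk; simp [hZ, hk]; exact hzA _
  -- the polygonal path
  set p : ℕ → X := fun k => x₂ + ∑ i ∈ Finset.range k, (W i * ‖u‖) • Z i with hp
  have hstep : ∀ k, p (k + 1) - p k = (W k * ‖u‖) • Z k := by
    intro k
    simp [hp, Finset.sum_range_succ]
  -- each step bounded
  have hbd : ∀ k ∈ Finset.range n, f (p (k + 1)) - f (p k) ≤ (L - ε) * (W k * ‖u‖) := by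
    intro k hk
    rw [Finset.mem_range] at hk
    rcases eq_or_lt_of_le (hW0 k) with hWk | hWk
    · have hpe : p (k + 1) = p k := by
        have h1 := hstep k
        rw [← hWk, zero_mul, zero_smul] at h1
        exact sub_eq_zero.mp h1
      rw [hpe, ← hWk]
      simp
    · have hZk : Z k ∈ A := hZA k hk
      have hZnorm : ‖Z k‖ = 1 := by
        have := hA hZk
        rwa [mem_sphere_zero_iff_norm] at this
      have hdeq : p (k + 1) - p k = (W k * ‖u‖) • Z k := hstep k
      have hdn : ‖p (k + 1) - p k‖ = W k * ‖u‖ := by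
        rw [hdeq, norm_smul, Real.norm_eq_abs, abs_of_pos (by positivity), hZnorm, mul_one]
      have hdpos : (0:ℝ) < ‖p (k + 1) - p k‖ := by rw [hdn]; positivity
      have hne' : p (k + 1) ≠ p k := by
        intro hh
        rw [hh, sub_self, norm_zero] at hdpos
        exact lt_irrefl _ hdpos
      have hZeq : Z k = ‖p (k + 1) - p k‖⁻¹ • (p (k + 1) - p k) := by
        rw [hdn, hdeq, smul_smul, inv_mul_cancel₀ (by positivity), one_smul]
      have hns : ¬ (L - ε < (f (p (k + 1)) - f (p k)) / ‖p (k + 1) - p k‖) := by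
        intro hlt
        exact hnot (Z k) hZk ⟨p (k + 1), p k, hne', hZeq, hlt⟩
      push_neg at hns
      rw [div_le_iff₀ hdpos] at hns
      rwa [hdn] at hns
  have hp0 : p 0 = x₂ := by simp [hp]
  have hsum : f (p n) - f x₂ ≤ (L - ε) * ‖u‖ := by
    rw [← hp0, ← Finset.sum_range_sub (fun k => f (p k)) n]
    calc ∑ k ∈ Finset.range n, (f (p (k + 1)) - f (p k))
        ≤ ∑ k ∈ Finset.range n, (L - ε) * (W k * ‖u‖) := Finset.sum_le_sum hbd
      _ = ((L - ε) * ‖u‖) * ∑ k ∈ Finset.range n, W k := by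
          rw [Finset.mul_sum]
          exact Finset.sum_congr rfl fun k _ => by ring
      _ = (L - ε) * ‖u‖ := by rw [hWsum, mul_one]
  have hpn : p n = x₂ + ‖u‖ • v := by
    have hss : (∑ i ∈ Finset.range n, (W i * ‖u‖) • Z i) = ‖u‖ • v := by
      rw [← hWZsum, Finset.smul_sum]
      exact Finset.sum_congr rfl fun k _ => by rw [smul_smul, mul_comm]
    simp only [hp]
    rw [hss]
  have hz0u : ‖u‖ • z0 = u := by
    rw [hz0eq, smul_smul, mul_inv_cancel₀ (ne_of_gt hun), one_smul]
  have hx1pn : ‖x₁ - p n‖ < ‖u‖ * δ := by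
    have hxe : x₁ - p n = ‖u‖ • (z0 - v) := by
      rw [hpn, smul_sub, hz0u, hu]
      abel
    rw [hxe, norm_smul, Real.norm_eq_abs, abs_of_pos hun]
    rw [dist_eq_norm] at hvd
    exact mul_lt_mul_of_pos_left hvd hun
  have hfl : f x₁ - f (p n) ≤ (C : ℝ) * ‖x₁ - p n‖ := by
    have h2 := hC.dist_le_mul x₁ (p n)
    rw [Real.dist_eq] at h2
    calc f x₁ - f (p n) ≤ |f x₁ - f (p n)| := le_abs_self _
      _ ≤ (C : ℝ) * dist x₁ (p n) := h2
      _ = (C : ℝ) * ‖x₁ - p n‖ := by rw [dist_eq_norm]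
  have hfl2 : f x₁ - f (p n) ≤ (C : ℝ) * (‖u‖ * δ) := by
    calc f x₁ - f (p n) ≤ (C : ℝ) * ‖x₁ - p n‖ := hfl
      _ ≤ (C : ℝ) * (‖u‖ * δ) := by
          apply mul_le_mul_of_nonneg_left hx1pn.le (by positivity)
  have heq : δ * (((C : ℝ) + 1) * ‖u‖) = gap := by
    rw [hδdef]
    field_simp
  have hupos : 0 < ‖u‖ * δ := by positivity
  nlinarith [hsum, hfl2, heq, hgap, hupos]
end

section
/- Let X be a Banach space with the Daugavet property, let ε > 0, and let S be a Lip-slice of S_X. Then for every x ∈ S_X there exists y ∈ S such that ‖x + y‖ > 2 − ε. -/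
open Set Metric Topology

lemma sliceA {𝕜 X : Type*} [RCLike 𝕜] [NormedAddCommGroup X] [NormedSpace 𝕜 X]
    (hX : DaugavetProperty 𝕜 X) (g : X →L[𝕜] 𝕜) (hg : ‖g‖ = 1)
    (x : X) (hx : ‖x‖ = 1) (α ε' : ℝ) (hα : α < 1) (hε' : 0 < ε') :
    ∃ y : X, ‖y‖ ≤ 1 ∧ α < RCLike.re (g y) ∧ 2 - ε' < ‖x + y‖ := by
  set δ : ℝ := min (min ((1 - α) / 2) (ε' / 2)) (1 / 2) with hδdef
  have hδ0 : 0 < δ := lt_min (lt_min (by linarith) (by linarith)) (by norm_num)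
  have hδa : δ ≤ (1 - α) / 2 := (min_le_left _ _).trans (min_le_left _ _)
  have hδb : δ ≤ ε' / 2 := (min_le_left _ _).trans (min_le_right _ _)
  have hδc : δ ≤ 1 / 2 := min_le_right _ _
  set T : X →L[𝕜] X := g.smulRight x with hTdef
  have hTnorm : ‖T‖ = 1 := by
    rw [hTdef, ContinuousLinearMap.norm_smulRight_apply, hg, hx, one_mul]
  have hD : ‖ContinuousLinearMap.id 𝕜 X + T‖ = 2 := by
    rw [hX T ⟨g, x, fun z => rfl⟩, hTnorm]; norm_num
  obtain ⟨z, hz1, hz2⟩ := ContinuousLinearMap.exists_lt_apply_of_lt_opNorm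
    (ContinuousLinearMap.id 𝕜 X + T) (show (2 : ℝ) - δ < ‖ContinuousLinearMap.id 𝕜 X + T‖ by
      rw [hD]; linarith)
  have hz2' : 2 - δ < ‖z + g z • x‖ := by
    simpa [hTdef, ContinuousLinearMap.add_apply] using hz2
  have hgz_le : ‖g z‖ ≤ 1 := by
    calc ‖g z‖ ≤ ‖g‖ * ‖z‖ := g.le_opNorm z
    _ ≤ 1 := by rw [hg, one_mul]; exact hz1.le
  have hzx : ‖z + g z • x‖ ≤ ‖z‖ + ‖g z‖ := by
    calc ‖z + g z • x‖ ≤ ‖z‖ + ‖g z • x‖ := norm_add_le _ _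
    _ = ‖z‖ + ‖g z‖ := by rw [norm_smul, hx, mul_one]
  have hgz_lt : 1 - δ < ‖g z‖ := by
    have : 2 - δ < ‖z‖ + ‖g z‖ := lt_of_lt_of_le hz2' hzx
    have := hz1.le
    linarith
  have hgz0 : g z ≠ 0 := by
    have : (0:ℝ) < ‖g z‖ := by linarith
    exact norm_pos_iff.mp this
  have hgznorm0 : (‖g z‖ : 𝕜) ≠ 0 := by
    simpa using fun h => hgz0 (norm_eq_zero.mp h)
  set θ : 𝕜 := (starRingEnd 𝕜) (g z) / (‖g z‖ : 𝕜) with hθdef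
  have hθ : ‖θ‖ = 1 := by
    rw [hθdef, norm_div, RCLike.norm_conj, RCLike.norm_ofReal, abs_of_nonneg (norm_nonneg _)]
    exact div_self (fun h => hgz0 (norm_eq_zero.mp h))
  have hθg : θ * g z = (‖g z‖ : 𝕜) := by
    rw [hθdef, div_mul_eq_mul_div, RCLike.conj_mul]
    rw [div_eq_iff hgznorm0]
    push_cast
    ring
  refine ⟨θ • z, ?_, ?_, ?_⟩
  · rw [norm_smul, hθ, one_mul]; exact hz1.le
  · have : g (θ • z) = (‖g z‖ : 𝕜) := by rw [map_smul, smul_eq_mul, hθg]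
    rw [this, RCLike.ofReal_re]
    linarith
  · have key : θ • z + g (θ • z) • x = θ • (z + g z • x) := by
      rw [map_smul, smul_eq_mul, smul_add, mul_smul]
    have hn1 : 2 - δ < ‖θ • z + g (θ • z) • x‖ := by
      rw [key, norm_smul, hθ, one_mul]; exact hz2'
    have hsplit : θ • z + g (θ • z) • x = (x + θ • z) + ((g (θ • z) - 1) • x) := by
      rw [sub_smul, one_smul]; abel
    have hsmall : ‖(g (θ • z) - 1) • x‖ < δ := by
      have hgv : g (θ • z) = (‖g z‖ : 𝕜) := by rw [map_smul, smul_eq_mul, hθg]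
      rw [norm_smul, hx, mul_one, hgv]
      have : ((‖g z‖ : ℝ) : 𝕜) - 1 = ((‖g z‖ - 1 : ℝ) : 𝕜) := by push_cast; ring
      rw [this, RCLike.norm_ofReal, abs_of_nonpos (by linarith)]
      linarith
    have := norm_add_le (x + θ • z) ((g (θ • z) - 1) • x)
    rw [← hsplit] at this
    linarith

lemma normSmulCLM {𝕜 X : Type*} [RCLike 𝕜] [NormedAddCommGroup X] [NormedSpace 𝕜 X]
    (g₀ : X →L[𝕜] 𝕜) (r : ℝ) : ‖r • g₀‖ = |r| * ‖g₀‖ := by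
  have h1 := norm_smul r g₀
  rwa [Real.norm_eq_abs] at h1

lemma reSmulCLM {𝕜 X : Type*} [RCLike 𝕜] [NormedAddCommGroup X] [NormedSpace 𝕜 X]
    (g₀ : X →L[𝕜] 𝕜) (r : ℝ) (y : X) : RCLike.re ((r • g₀) y) = r * RCLike.re (g₀ y) := by
  rw [ContinuousLinearMap.smul_apply, RCLike.smul_re]

lemma memClosureConv {𝕜 X : Type*} [RCLike 𝕜] [NormedAddCommGroup X] [NormedSpace 𝕜 X]
    [NormedSpace ℝ X] [IsScalarTower ℝ 𝕜 X]
    (hX : DaugavetProperty 𝕜 X) (x : X) (hx : ‖x‖ = 1) (ε' : ℝ) (hε' : 0 < ε')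
    (u : X) (hu : ‖u‖ ≤ 1) :
    u ∈ closure (convexHull ℝ {y : X | ‖y‖ ≤ 1 ∧ 2 - ε' < ‖x + y‖}) := by
  set D : Set X := {y : X | ‖y‖ ≤ 1 ∧ 2 - ε' < ‖x + y‖} with hDdef
  have hxne : x ≠ 0 := fun h => by simp [h] at hx
  obtain ⟨g1, hg1, _⟩ := exists_dual_vector 𝕜 x (norm_ne_zero_iff.mpr hxne)
  obtain ⟨y₀, hy₀1, _, hy₀3⟩ := sliceA hX g1 hg1 x hx 0 ε' one_pos hε'
  have hy₀D : y₀ ∈ D := ⟨hy₀1, hy₀3⟩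
  by_contra hcon
  obtain ⟨h, c, hc1, hc2⟩ := geometric_hahn_banach_closed_point
    ((convex_convexHull ℝ D).closure) isClosed_closure hcon
  set g₀ : X →L[𝕜] 𝕜 := h.extendTo𝕜' with hg₀def
  have hre : ∀ z : X, RCLike.re (g₀ z) = h z := fun z => h.extendTo𝕜'_apply_re z
  have hg₀norm : ‖g₀‖ = ‖h‖ := h.norm_extendTo𝕜'
  have hyc : h y₀ < c := hc1 y₀ (subset_closure (subset_convexHull ℝ D hy₀D))
  have hne : h ≠ 0 := by
    intro h0
    rw [h0] at hyc hc2
    simp at hyc hc2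
    linarith
  have hpos : 0 < ‖g₀‖ := by
    rw [hg₀norm]
    exact norm_pos_iff.mpr hne
  set g : X →L[𝕜] 𝕜 := (‖g₀‖⁻¹ : ℝ) • g₀ with hgdef
  have hgnorm : ‖g‖ = 1 := by
    rw [hgdef, normSmulCLM g₀ _, abs_of_nonneg (inv_nonneg.mpr hpos.le)]
    exact inv_mul_cancel₀ hpos.ne'
  have hαlt : c / ‖g₀‖ < 1 := by
    rw [div_lt_one hpos]
    calc c < h u := hc2
    _ = RCLike.re (g₀ u) := (hre u).symm
    _ ≤ ‖g₀ u‖ := RCLike.re_le_norm _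
    _ ≤ ‖g₀‖ * ‖u‖ := g₀.le_opNorm u
    _ ≤ ‖g₀‖ := by nlinarith
  obtain ⟨y, hy1, hy2, hy3⟩ := sliceA hX g hgnorm x hx (c / ‖g₀‖) ε' hαlt hε'
  have hyD : y ∈ D := ⟨hy1, hy3⟩
  have hylt : h y < c := hc1 y (subset_closure (subset_convexHull ℝ D hyD))
  have hgy : RCLike.re (g y) = ‖g₀‖⁻¹ * h y := by
    rw [hgdef, reSmulCLM g₀ _ y, hre]
  rw [hgy] at hy2
  rw [div_eq_mul_inv, mul_comm] at hy2
  have := (mul_lt_mul_iff_right₀ (inv_pos.mpr hpos)).mp hy2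
  linarith

set_option maxHeartbeats 1000000 in
/-- In a space with the Daugavet property, every Lip-slice almost norms every
point of the sphere. -/
theorem daugavet_lip_slice_norming {𝕜 X : Type*} [RCLike 𝕜] [NormedAddCommGroup X] [NormedSpace 𝕜 X]
    [NormedSpace ℝ X] [IsScalarTower ℝ 𝕜 X] [CompleteSpace X]
    (hX : DaugavetProperty 𝕜 X) (ε : ℝ) (hε : 0 < ε) (S : Set X) (hS : IsLipSlice S) :
    ∀ x : X, ‖x‖ = 1 → ∃ y ∈ S, 2 - ε < ‖x + y‖ := by
  classical
  obtain ⟨f, ε₀, ⟨C, hC⟩, ⟨a, b, hfab⟩, hε₀, hSeq⟩ := hS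
  intro x hx
  set L : ℝ := lipSemi f with hLdef
  have hCr : ∀ x₁ x₂ : X, ‖f x₁ - f x₂‖ ≤ (C : ℝ) * ‖x₁ - x₂‖ := by
    intro x₁ x₂
    have h1 := hC.dist_le_mul x₁ x₂
    rwa [dist_eq_norm, dist_eq_norm] at h1
  have hab : a ≠ b := fun h => hfab (by rw [h])
  have hRne : {r : ℝ | ∃ x₁ x₂ : X, x₁ ≠ x₂ ∧ r = ‖f x₁ - f x₂‖ / ‖x₁ - x₂‖}.Nonempty :=
    ⟨_, a, b, hab, rfl⟩
  have hLs : L = sSup {r : ℝ | ∃ x₁ x₂ : X, x₁ ≠ x₂ ∧ r = ‖f x₁ - f x₂‖ / ‖x₁ - x₂‖} := rfl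
  have hlt : L - ε₀ / 2 < sSup {r : ℝ | ∃ x₁ x₂ : X, x₁ ≠ x₂ ∧ r = ‖f x₁ - f x₂‖ / ‖x₁ - x₂‖} := by
    rw [← hLs]; linarith
  obtain ⟨r, hrmem, hrgt⟩ := exists_lt_of_lt_csSup hRne hlt
  obtain ⟨x₁, x₂, hne12, rfl⟩ := hrmem
  obtain ⟨p, q, hpq, hσ⟩ : ∃ p q : X, p ≠ q ∧ L - ε₀ / 2 < (f p - f q) / ‖p - q‖ := by
    rcases le_total (f x₂) (f x₁) with hle | hle
    · refine ⟨x₁, x₂, hne12, ?_⟩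
      rwa [Real.norm_eq_abs, abs_of_nonneg (by linarith)] at hrgt
    · refine ⟨x₂, x₁, hne12.symm, ?_⟩
      rwa [Real.norm_eq_abs, abs_of_nonpos (by linarith), neg_sub, norm_sub_rev] at hrgt
  have hρ : 0 < ‖p - q‖ := by rw [norm_pos_iff, sub_ne_zero]; exact hpq
  set ρ : ℝ := ‖p - q‖ with hρdef
  set σ : ℝ := (f p - f q) / ρ with hσdef
  set m : ℝ := L - ε₀ with hmdef
  set δ : ℝ := σ - m with hδdef
  have hδpos : 0 < δ := by rw [hδdef, hmdef]; rw [hσdef]; linarith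
  have habs : (0:ℝ) ≤ |m| := abs_nonneg m
  set ε' : ℝ := min (ε / 2) (min (1 / 2) (δ / (4 * (|m| + 1)))) with hε'def
  have hε'pos : 0 < ε' := by
    refine lt_min (by linarith) (lt_min (by norm_num) (by positivity))
  have hε'a : ε' ≤ ε / 2 := min_le_left _ _
  have hε'b : ε' ≤ 1 / 2 := (min_le_right _ _).trans (min_le_left _ _)
  have hε'c : ε' ≤ δ / (4 * (|m| + 1)) := (min_le_right _ _).trans (min_le_right _ _)
  set Cr : ℝ := (C : ℝ) with hCrdef
  have hCr0 : (0:ℝ) ≤ Cr := C.coe_nonneg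
  set η : ℝ := δ / (2 * (Cr + 1)) with hηdef
  have hηpos : 0 < η := by rw [hηdef]; positivity
  set u : X := ρ⁻¹ • (p - q) with hudef
  have hρu : ρ • u = p - q := by
    rw [hudef, smul_smul, mul_inv_cancel₀ hρ.ne', one_smul]
  have hun : ‖u‖ = 1 := by
    rw [hudef]
    have h1 := norm_smul (ρ⁻¹) (p - q)
    rw [h1, Real.norm_eq_abs, abs_of_nonneg (inv_nonneg.mpr hρ.le), ← hρdef,
      inv_mul_cancel₀ hρ.ne']
  have humem := memClosureConv hX x hx ε' hε'pos u hun.le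
  rw [Metric.mem_closure_iff] at humem
  obtain ⟨w, hwD, hwu⟩ := humem η hηpos
  rw [mem_convexHull_iff_exists_fintype] at hwD
  obtain ⟨ι, hι, lam0, ys0, hlam0, hsum0, hys0, hw0⟩ := hwD
  set n : ℕ := Fintype.card ι with hndef
  set e : Fin n ≃ ι := (Fintype.equivFin ι).symm with hedef
  set lam : ℕ → ℝ := fun i => if hi : i < n then lam0 (e ⟨i, hi⟩) else 0 with hlamdef
  set yy : ℕ → X := fun i => if hi : i < n then ys0 (e ⟨i, hi⟩) else 0 with hyydef
  have hlam_nonneg : ∀ i, 0 ≤ lam i := by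
    intro i
    rw [hlamdef]
    dsimp only
    split
    · exact hlam0 _
    · exact le_refl 0
  have hlam_eq : ∀ i : Fin n, lam i.val = lam0 (e i) := by
    intro i
    rw [hlamdef]
    dsimp only
    rw [dif_pos i.isLt]
  have hyy_eq : ∀ i : Fin n, yy i.val = ys0 (e i) := by
    intro i
    rw [hyydef]
    dsimp only
    rw [dif_pos i.isLt]
  have hsum : ∑ i ∈ Finset.range n, lam i = 1 := by
    rw [← Fin.sum_univ_eq_sum_range]
    calc ∑ i : Fin n, lam i.val = ∑ i : Fin n, lam0 (e i) :=
          Finset.sum_congr rfl fun i _ => hlam_eq i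
    _ = ∑ i, lam0 i := Equiv.sum_comp e lam0
    _ = 1 := hsum0
  have hwsum : ∑ i ∈ Finset.range n, lam i • yy i = w := by
    rw [← Fin.sum_univ_eq_sum_range (fun i => lam i • yy i)]
    calc ∑ i : Fin n, lam i.val • yy i.val = ∑ i : Fin n, lam0 (e i) • ys0 (e i) :=
          Finset.sum_congr rfl fun i _ => by rw [hlam_eq i, hyy_eq i]
    _ = ∑ i, lam0 i • ys0 i := Equiv.sum_comp e (fun i => lam0 i • ys0 i)
    _ = w := hw0
  have hyyD : ∀ i, i < n → ‖yy i‖ ≤ 1 ∧ 2 - ε' < ‖x + yy i‖ := by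
    intro i hi
    rw [hyydef]
    dsimp only
    rw [dif_pos hi]
    exact hys0 _
  set P : ℕ → X := fun j => q + ρ • ∑ i ∈ Finset.range j, lam i • yy i with hPdef
  have hstep : ∀ j, P (j + 1) - P j = ρ • (lam j • yy j) := by
    intro j
    rw [hPdef]
    dsimp only
    rw [Finset.sum_range_succ, smul_add]
    abel
  have hPn : ‖P n - p‖ ≤ ρ * η := by
    have hpqu : p = q + ρ • u := by rw [hρu]; abel
    have h1 : P n - p = ρ • (w - u) := by
      rw [hPdef]
      dsimp only
      rw [hwsum, hpqu, smul_sub]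
      abel
    rw [h1]
    have h2 := norm_smul ρ (w - u)
    rw [h2, Real.norm_eq_abs, abs_of_pos hρ]
    have h3 : ‖w - u‖ ≤ η := by
      rw [← dist_eq_norm, dist_comm]
      exact (le_of_lt hwu)
    exact mul_le_mul_of_nonneg_left h3 hρ.le
  have key : ∃ j, j < n ∧ 0 < lam j ∧ m < (f (P (j + 1)) - f (P j)) / ‖P (j + 1) - P j‖ := by
    by_contra hcon
    push_neg at hcon
    have hbound : ∀ j ∈ Finset.range n,
        f (P (j + 1)) - f (P j) ≤ ρ * lam j * (m + |m| * ε') := by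
      intro j hj
      rcases eq_or_lt_of_le (hlam_nonneg j) with h0 | hposl
      · have hs := hstep j
        rw [← h0, zero_smul, smul_zero] at hs
        have hPP : P (j + 1) = P j := sub_eq_zero.mp hs
        rw [hPP, ← h0]
        simp
      · obtain ⟨hy1, hy2⟩ := hyyD j (Finset.mem_range.mp hj)
        have ht1 : 1 - ε' < ‖yy j‖ := by
          have h4 := norm_add_le x (yy j)
          rw [hx] at h4
          linarith
        have htpos : (0:ℝ) < ‖yy j‖ := by linarith
        have hd : ‖P (j + 1) - P j‖ = ρ * (lam j * ‖yy j‖) := by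
          rw [hstep j]
          have h5 := norm_smul ρ (lam j • yy j)
          have h6 := norm_smul (lam j) (yy j)
          rw [h5, h6, Real.norm_eq_abs, Real.norm_eq_abs, abs_of_pos hρ, abs_of_pos hposl]
        have hdpos : 0 < ‖P (j + 1) - P j‖ := by rw [hd]; positivity
        have hslope := hcon j (Finset.mem_range.mp hj) hposl
        have hle : f (P (j + 1)) - f (P j) ≤ m * ‖P (j + 1) - P j‖ :=
          (div_le_iff₀ hdpos).mp hslope
        rw [hd] at hle
        rcases abs_cases m with ⟨ha1, ha2⟩ | ⟨ha1, ha2⟩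
        · rw [ha1]
          have e0 : m * (ρ * (lam j * ‖yy j‖)) ≤ m * (ρ * lam j) := by
            have e3 : lam j * ‖yy j‖ ≤ lam j * 1 := mul_le_mul_of_nonneg_left hy1 hposl.le
            have e4 := mul_le_mul_of_nonneg_left e3 hρ.le
            have e2 : ρ * (lam j * ‖yy j‖) ≤ ρ * lam j := by rw [mul_one] at e4; exact e4
            exact mul_le_mul_of_nonneg_left e2 ha2
          have e1 : (0:ℝ) ≤ ρ * lam j * (m * ε') :=
            mul_nonneg (mul_nonneg hρ.le hposl.le) (mul_nonneg ha2 hε'pos.le)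
          linarith [hle, e0, e1]
        · rw [ha1]
          have e0 : m * ‖yy j‖ ≤ m * (1 - ε') := mul_le_mul_of_nonpos_left ht1.le ha2.le
          have e1 : ρ * lam j * (m * ‖yy j‖) ≤ ρ * lam j * (m * (1 - ε')) :=
            mul_le_mul_of_nonneg_left e0 (mul_nonneg hρ.le hposl.le)
          linarith [hle, e1]
    have hsum_le := Finset.sum_le_sum hbound
    rw [Finset.sum_range_sub (fun j => f (P j)) n] at hsum_le
    have hRHS : ∑ j ∈ Finset.range n, ρ * lam j * (m + |m| * ε') = ρ * (m + |m| * ε') := by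
      calc ∑ j ∈ Finset.range n, ρ * lam j * (m + |m| * ε')
          = ∑ j ∈ Finset.range n, ρ * (m + |m| * ε') * lam j :=
            Finset.sum_congr rfl fun j _ => by ring
      _ = ρ * (m + |m| * ε') * ∑ j ∈ Finset.range n, lam j := by rw [Finset.mul_sum]
      _ = ρ * (m + |m| * ε') := by rw [hsum, mul_one]
    rw [hRHS] at hsum_le
    have hP0 : P 0 = q := by rw [hPdef]; simp
    have hfPn : f p - f (P n) ≤ Cr * (ρ * η) := by
      have h7 := hCr p (P n)
      rw [Real.norm_eq_abs] at h7
      have h8 : ‖p - P n‖ ≤ ρ * η := by rw [norm_sub_rev]; exact hPn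
      have h9 := le_abs_self (f p - f (P n))
      nlinarith [mul_le_mul_of_nonneg_left h8 hCr0]
    have hσρ : f p - f q = σ * ρ := by
      rw [hσdef, div_mul_cancel₀ _ hρ.ne']
    rw [hP0] at hsum_le
    have hfinal : σ * ρ ≤ (m + |m| * ε' + Cr * η) * ρ := by
      have e5 : f p - f q ≤ Cr * (ρ * η) + ρ * (m + |m| * ε') := by linarith [hfPn, hsum_le]
      rw [hσρ] at e5
      linarith [e5]
    have hfinal2 : σ ≤ m + |m| * ε' + Cr * η := le_of_mul_le_mul_right hfinal hρ
    have h5 : |m| * ε' ≤ δ / 4 := by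
      have hmp : (0:ℝ) < 4 * (|m| + 1) := by positivity
      have e1 : |m| * ε' ≤ |m| * (δ / (4 * (|m| + 1))) := mul_le_mul_of_nonneg_left hε'c habs
      have e2 : |m| * (δ / (4 * (|m| + 1))) ≤ δ / 4 := by
        rw [← mul_div_assoc, div_le_div_iff₀ hmp (by norm_num : (0:ℝ) < 4)]
        linarith [hδpos]
      linarith
    have h6 : Cr * η ≤ δ / 2 := by
      have hcp : (0:ℝ) < 2 * (Cr + 1) := by positivity
      rw [hηdef, ← mul_div_assoc, div_le_div_iff₀ hcp (by norm_num : (0:ℝ) < 2)]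
      have := mul_nonneg hCr0 hδpos.le
      linarith
    linarith
  obtain ⟨j, hjn, hlj, hslope⟩ := key
  obtain ⟨hy1, hy2⟩ := hyyD j hjn
  have ht1 : 1 - ε' < ‖yy j‖ := by
    have h4 := norm_add_le x (yy j)
    rw [hx] at h4
    linarith
  have htpos : (0:ℝ) < ‖yy j‖ := by linarith
  have hd : ‖P (j + 1) - P j‖ = ρ * (lam j * ‖yy j‖) := by
    rw [hstep j]
    have h5 := norm_smul ρ (lam j • yy j)
    have h6 := norm_smul (lam j) (yy j)
    rw [h5, h6, Real.norm_eq_abs, Real.norm_eq_abs, abs_of_pos hρ, abs_of_pos hlj]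
  have hdpos : 0 < ‖P (j + 1) - P j‖ := by rw [hd]; positivity
  have hne' : P (j + 1) ≠ P j := sub_ne_zero.mp (norm_pos_iff.mp hdpos)
  refine ⟨‖yy j‖⁻¹ • yy j, ?_, ?_⟩
  · rw [hSeq]
    refine ⟨P (j + 1), P j, hne', ?_, hslope⟩
    rw [hd, hstep j, smul_smul, smul_smul]
    congr 1
    field_simp
  · have hid : x + yy j = (x + ‖yy j‖⁻¹ • yy j) + (yy j - ‖yy j‖⁻¹ • yy j) := by abel
    have hfactor : yy j - ‖yy j‖⁻¹ • yy j = (1 - ‖yy j‖⁻¹) • yy j := by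
      rw [sub_smul, one_smul]
    have hsub : ‖yy j - ‖yy j‖⁻¹ • yy j‖ = 1 - ‖yy j‖ := by
      rw [hfactor]
      have hns := norm_smul (1 - ‖yy j‖⁻¹) (yy j)
      rw [hns, Real.norm_eq_abs]
      have e1 : (1 - ‖yy j‖⁻¹) * ‖yy j‖ = ‖yy j‖ - 1 := by field_simp
      calc |1 - ‖yy j‖⁻¹| * ‖yy j‖ = |(1 - ‖yy j‖⁻¹) * ‖yy j‖| := by
            rw [abs_mul, abs_of_pos htpos]
      _ = |‖yy j‖ - 1| := by rw [e1]
      _ = 1 - ‖yy j‖ := by rw [abs_of_nonpos (by linarith), neg_sub]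
    have h7 := norm_add_le (x + ‖yy j‖⁻¹ • yy j) (yy j - ‖yy j‖⁻¹ • yy j)
    rw [← hid, hsub] at h7
    linarith
end

section
/- Let X be a Banach space over 𝕂 (𝕂 = ℝ or ℂ) with the alternative Daugavet property, let ε > 0, and let S be a Lip-slice of S_X. Then for every x ∈ S_X there exists y ∈ S such that max_{θ ∈ 𝕋} ‖x + θ·y‖ > 2 − ε, where 𝕋 = {θ ∈ 𝕂 : |θ| = 1}. -/
open Set Metric Topology

section Aux

variable {X : Type*} [NormedAddCommGroup X] [NormedSpace ℝ X]

/-- The set of slopes of `f` in direction `z`. -/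
def auxSlopes (f : X → ℝ) (z : X) : Set ℝ :=
  {r : ℝ | ∃ (v : X) (t : ℝ), 0 < t ∧ r = (f (v + t • z) - f v) / t}

lemma auxSlopes_nonempty (f : X → ℝ) (z : X) : (auxSlopes f z).Nonempty :=
  ⟨(f ((0:X) + (1:ℝ) • z) - f 0) / 1, 0, 1, one_pos, rfl⟩

lemma lipSemi_bddAbove (f : X → ℝ) {C : NNReal} (hC : LipschitzWith C f) :
    BddAbove {r : ℝ | ∃ x₁ x₂ : X, x₁ ≠ x₂ ∧ r = ‖f x₁ - f x₂‖ / ‖x₁ - x₂‖} := by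
  refine ⟨C, fun r hr => ?_⟩
  obtain ⟨x₁, x₂, hne, rfl⟩ := hr
  have hd : (0:ℝ) < ‖x₁ - x₂‖ := by
    rw [norm_pos_iff, sub_ne_zero]; exact hne
  rw [div_le_iff₀ hd]
  have := hC.dist_le_mul x₁ x₂
  rwa [Real.dist_eq, dist_eq_norm, ← Real.norm_eq_abs] at this

lemma slope_le_lipSemi (f : X → ℝ) {C : NNReal} (hC : LipschitzWith C f) (x₁ x₂ : X)
    (h : x₁ ≠ x₂) : (f x₁ - f x₂) / ‖x₁ - x₂‖ ≤ lipSemi f := by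
  have h1 : (f x₁ - f x₂) / ‖x₁ - x₂‖ ≤ ‖f x₁ - f x₂‖ / ‖x₁ - x₂‖ :=
    div_le_div_of_nonneg_right ?h (by positivity) |>.trans_eq rfl
  · exact h1.trans (le_csSup (lipSemi_bddAbove f hC) ⟨x₁, x₂, h, rfl⟩)
  case h => exact le_abs_self _

set_option linter.unusedSectionVars false

lemma mem_auxSlopes_le (f : X → ℝ) {C : NNReal} (hC : LipschitzWith C f) {z : X} {r : ℝ}
    (hr : r ∈ auxSlopes f z) : r ≤ lipSemi f * ‖z‖ := by
  obtain ⟨v, t, ht, rfl⟩ := hr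
  by_cases hz : z = 0
  · simp [hz]
  · have hz' : (0:ℝ) < ‖z‖ := norm_pos_iff.2 hz
    have hne : v + t • z ≠ v := by
      simp only [ne_eq, add_eq_left, smul_eq_zero, not_or]
      exact ⟨ht.ne', hz⟩
    have hkey := slope_le_lipSemi f hC (v + t • z) v hne
    have hnorm : ‖(v + t • z) - v‖ = t * ‖z‖ := by
      rw [add_sub_cancel_left, norm_smul, Real.norm_eq_abs, abs_of_pos ht]
    rw [hnorm] at hkey
    have : (f (v + t • z) - f v) / t = ((f (v + t • z) - f v) / (t * ‖z‖)) * ‖z‖ := by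
      field_simp
    rw [this]
    calc ((f (v + t • z) - f v) / (t * ‖z‖)) * ‖z‖ ≤ lipSemi f * ‖z‖ :=
      mul_le_mul_of_nonneg_right hkey (norm_nonneg z)

/-- The directional ascent functional: a sublinear function dominating slopes. -/
noncomputable def auxA (f : X → ℝ) (z : X) : ℝ := sSup (auxSlopes f z)

lemma bddAbove_auxSlopes (f : X → ℝ) {C : NNReal} (hC : LipschitzWith C f) (z : X) :
    BddAbove (auxSlopes f z) :=
  ⟨lipSemi f * ‖z‖, fun _ hr => mem_auxSlopes_le f hC hr⟩

lemma le_auxA (f : X → ℝ) {C : NNReal} (hC : LipschitzWith C f) {z : X} {r : ℝ}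
    (hr : r ∈ auxSlopes f z) : r ≤ auxA f z :=
  le_csSup (bddAbove_auxSlopes f hC z) hr

lemma auxA_le (f : X → ℝ) {C : NNReal} (hC : LipschitzWith C f) (z : X) :
    auxA f z ≤ lipSemi f * ‖z‖ :=
  csSup_le (auxSlopes_nonempty f z) (fun _ hr => mem_auxSlopes_le f hC hr)

lemma auxA_zero (f : X → ℝ) : auxA f 0 = 0 := by
  have : auxSlopes f 0 = {0} := by
    ext r
    constructor
    · rintro ⟨v, t, ht, rfl⟩
      simp
    · rintro rfl
      exact ⟨0, 1, one_pos, by simp⟩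
  rw [auxA, this, csSup_singleton]

lemma auxA_add (f : X → ℝ) {C : NNReal} (hC : LipschitzWith C f) (y z : X) :
    auxA f (y + z) ≤ auxA f y + auxA f z := by
  refine csSup_le (auxSlopes_nonempty f _) ?_
  rintro r ⟨v, t, ht, rfl⟩
  have hsplit : (f (v + t • (y + z)) - f v) / t
      = (f (v + t • y) - f v) / t + (f ((v + t • y) + t • z) - f (v + t • y)) / t := by
    rw [← add_div, sub_add_sub_cancel', smul_add, add_assoc]
  rw [hsplit]
  exact add_le_add (le_auxA f hC (z := y) ⟨v, t, ht, rfl⟩)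
    (le_auxA f hC (z := z) ⟨v + t • y, t, ht, rfl⟩)

lemma auxA_smul_le (f : X → ℝ) {C : NNReal} (hC : LipschitzWith C f) {c : ℝ} (hc : 0 < c)
    (z : X) : auxA f (c • z) ≤ c * auxA f z := by
  refine csSup_le (auxSlopes_nonempty f _) ?_
  rintro r ⟨v, t, ht, rfl⟩
  have h1 : t • (c • z) = (t * c) • z := (smul_smul t c z)
  have h2 : (f (v + t • (c • z)) - f v) / t
      = c * ((f (v + (t * c) • z) - f v) / (t * c)) := by
    rw [h1]; field_simp
  rw [h2]
  exact mul_le_mul_of_nonneg_left (le_auxA f hC ⟨v, t * c, by positivity, rfl⟩) hc.le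

lemma auxA_smul (f : X → ℝ) {C : NNReal} (hC : LipschitzWith C f) {c : ℝ} (hc : 0 < c)
    (z : X) : auxA f (c • z) = c * auxA f z := by
  refine le_antisymm (auxA_smul_le f hC hc z) ?_
  have h := auxA_smul_le f hC (inv_pos.2 hc) (c • z)
  rw [inv_smul_smul₀ hc.ne'] at h
  have := mul_le_mul_of_nonneg_left h hc.le
  rwa [← mul_assoc, mul_inv_cancel₀ hc.ne', one_mul] at this

lemma auxA_neg_ge (f : X → ℝ) {C : NNReal} (hC : LipschitzWith C f) (z : X) :
    -auxA f (-z) ≤ auxA f z := by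
  have h0 : (0:ℝ) = auxA f 0 := (auxA_zero f).symm
  have := auxA_add f hC z (-z)
  rw [add_neg_cancel, auxA_zero f] at this
  linarith

lemma exists_dominated_functional (f : X → ℝ) {C : NNReal} (hC : LipschitzWith C f)
    {e : X} (he : e ≠ 0) :
    ∃ g : X →ₗ[ℝ] ℝ, g e = auxA f e ∧ ∀ x, g x ≤ auxA f x := by
  set p : Submodule ℝ X := ℝ ∙ e with hp
  set eqv : ℝ ≃ₗ[ℝ] ↥p := LinearEquiv.toSpanNonzeroSingleton ℝ X e he with heqv
  set f₀ : ↥p →ₗ[ℝ] ℝ := (auxA f e) • (eqv.symm : ↥p →ₗ[ℝ] ℝ) with hf₀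
  have coord : ∀ (t : ℝ) (h : t • e ∈ p), eqv.symm ⟨t • e, h⟩ = t := by
    intro t h
    rw [LinearEquiv.symm_apply_eq, heqv, LinearEquiv.toSpanNonzeroSingleton_apply]
  have hval : ∀ (t : ℝ) (h : t • e ∈ p), f₀ ⟨t • e, h⟩ = auxA f e * t := by
    intro t h
    rw [hf₀]
    simp only [LinearMap.smul_apply, LinearEquiv.coe_coe, smul_eq_mul]
    rw [coord t h]
  have hdom : ∀ v : ↥p, f₀ v ≤ auxA f (v : X) := by
    rintro ⟨v, hv⟩
    obtain ⟨t, rfl⟩ := Submodule.mem_span_singleton.1 hv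
    rw [hval t hv]
    rcases lt_trichotomy t 0 with ht | rfl | ht
    · have h1 : auxA f ((-t) • e) = (-t) * auxA f e := auxA_smul f hC (neg_pos.2 ht) e
      have h2 : -auxA f (-(t • e)) ≤ auxA f (t • e) := auxA_neg_ge f hC (t • e)
      rw [show -(t • e) = (-t) • e by rw [neg_smul], h1] at h2
      have : auxA f ((⟨t • e, hv⟩ : ↥p) : X) = auxA f (t • e) := rfl
      rw [this]
      linarith [h2]
    · simp [auxA_zero f]
    · rw [mul_comm, ← auxA_smul f hC ht e]
  obtain ⟨g, hg1, hg2⟩ := exists_extension_of_le_sublinear ⟨p, f₀⟩ (auxA f)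
    (fun c hc x => auxA_smul f hC hc x) (auxA_add f hC) hdom
  have hmem : e ∈ p := Submodule.mem_span_singleton_self e
  refine ⟨g, ?_, hg2⟩
  have h1 : g e = f₀ ⟨e, hmem⟩ := hg1 ⟨e, hmem⟩
  have h2 : (⟨e, hmem⟩ : ↥p) = ⟨(1:ℝ) • e, by simpa using hmem⟩ := by
    apply Subtype.ext; simp
  rw [h1, h2, hval 1 _, mul_one]

end Aux

set_option maxHeartbeats 1000000 in
/-- In a space with the alternative Daugavet property, every Lip-slice contains, for
every point x of the sphere, an element y with max over unimodular θ of ‖x + θ y‖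
exceeding 2 - ε. -/
theorem alt_daugavet_lip_slice_norming {𝕜 X : Type*} [RCLike 𝕜] [NormedAddCommGroup X] [NormedSpace 𝕜 X]
    [NormedSpace ℝ X] [IsScalarTower ℝ 𝕜 X] [CompleteSpace X]
    (hX : AltDaugavetProperty 𝕜 X) (ε : ℝ) (hε : 0 < ε) (S : Set X) (hS : IsLipSlice S) :
    ∀ x : X, ‖x‖ = 1 → ∃ y ∈ S, ∃ θ : 𝕜, ‖θ‖ = 1 ∧ 2 - ε < ‖x + θ • y‖ := by
  intro x hx
  obtain ⟨f, ε₀, ⟨C, hC⟩, ⟨a, b, hab⟩, hε₀, rfl⟩ := hS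
  set L := lipSemi f with hL
  -- L is positive
  have hab' : a ≠ b := fun h => hab (by rw [h])
  have hd : (0:ℝ) < ‖a - b‖ := by rw [norm_pos_iff, sub_ne_zero]; exact hab'
  have hposelt : (0:ℝ) < ‖f a - f b‖ / ‖a - b‖ := by
    apply div_pos _ hd
    rw [norm_pos_iff, sub_ne_zero]; exact hab
  have hLpos : 0 < L :=
    lt_of_lt_of_le hposelt (le_csSup (lipSemi_bddAbove f hC) ⟨a, b, hab', rfl⟩)
  -- a pair of points with slope close to L
  set η := min (ε₀ / 2) (L / 2) with hη
  have hηpos : 0 < η := by positivity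
  have hne : {r : ℝ | ∃ x₁ x₂ : X, x₁ ≠ x₂ ∧ r = ‖f x₁ - f x₂‖ / ‖x₁ - x₂‖}.Nonempty :=
    ⟨_, a, b, hab', rfl⟩
  obtain ⟨r, hrmem, hrgt⟩ := exists_lt_of_lt_csSup hne (show L - η < L by linarith only [hηpos])
  obtain ⟨p, q, hpq, hrv⟩ := hrmem
  -- orient the pair so the slope is positive
  obtain ⟨p', q', hpq', hslope⟩ :
      ∃ p' q' : X, p' ≠ q' ∧ L - η < (f p' - f q') / ‖p' - q'‖ := by
    rcases le_or_gt (f q) (f p) with hfle | hflt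
    · refine ⟨p, q, hpq, ?_⟩
      rw [hrv, Real.norm_eq_abs, abs_of_nonneg (by linarith only [hfle])] at hrgt
      exact hrgt
    · refine ⟨q, p, hpq.symm, ?_⟩
      rw [hrv, Real.norm_eq_abs, abs_of_neg (by linarith only [hflt])] at hrgt
      rw [norm_sub_rev q p]
      rw [neg_sub] at hrgt
      exact hrgt
  -- the unit direction of the good pair
  set d := ‖p' - q'‖ with hdd
  have hdpos : (0:ℝ) < d := by rw [hdd, norm_pos_iff, sub_ne_zero]; exact hpq'
  set e : X := d⁻¹ • (p' - q') with he
  have hee : e ≠ 0 := by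
    rw [he, smul_ne_zero_iff]
    exact ⟨inv_ne_zero hdpos.ne', sub_ne_zero.2 hpq'⟩
  have heN : ‖e‖ = 1 := by
    rw [he, hdd]; exact norm_smul_inv_norm (sub_ne_zero.2 hpq')
  -- auxA f e is close to L
  have hqe : q' + d • e = p' := by
    rw [he, smul_smul, mul_inv_cancel₀ hdpos.ne', one_smul]
    abel
  have hAe : L - η < auxA f e := by
    refine lt_of_lt_of_le hslope (le_auxA f hC ⟨q', d, hdpos, ?_⟩)
    rw [hqe]
  -- the dominated linear functional
  obtain ⟨g, hge, hgA⟩ := exists_dominated_functional f hC hee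
  have hgbound : ∀ u : X, ‖g u‖ ≤ L * ‖u‖ := by
    intro u
    rw [Real.norm_eq_abs, abs_le]
    constructor
    · have h1 : g (-u) ≤ auxA f (-u) := hgA (-u)
      have h2 : auxA f (-u) ≤ L * ‖-u‖ := auxA_le f hC (-u)
      rw [map_neg, norm_neg] at *
      linarith only [h1, h2]
    · exact (hgA u).trans (auxA_le f hC u)
  set G : X →L[ℝ] ℝ := LinearMap.mkContinuous g L hgbound with hG
  have hGapp : ∀ u : X, G u = g u := fun u => rfl
  -- extend to a 𝕜-linear functional
  set h : X →L[𝕜] 𝕜 := G.extendTo𝕜' with hh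
  have hre : ∀ u : X, RCLike.re (h u) = g u := by
    intro u
    have : h u = G.toLinearMap.extendTo𝕜' u := rfl
    rw [hh]
    exact (StrongDual.re_extendRCLike_apply G u).trans (hGapp u)
  set M := ‖h‖ with hM
  have hMge : L - η ≤ M := by
    have h1 : RCLike.re (h e) = g e := hre e
    have h2 : g e = auxA f e := hge
    have h3 : RCLike.re (h e) ≤ ‖h e‖ := RCLike.re_le_norm _
    have h4 : ‖h e‖ ≤ M * ‖e‖ := h.le_opNorm e
    rw [heN, mul_one] at h4
    linarith only [h1, h2, h3, h4, hAe]
  have hLη : 0 < L - η := by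
    have hm : η ≤ L / 2 := min_le_right _ _
    linarith only [hm, hLpos]
  have hMpos : 0 < M := by linarith only [hLη, hMge]
  -- normalize the functional
  set h₁ : X →L[𝕜] 𝕜 := ((M⁻¹ : ℝ) : 𝕜) • h with hh₁
  have hh₁norm : ‖h₁‖ = 1 := by
    have : ‖h₁‖ = ‖((M⁻¹ : ℝ) : 𝕜)‖ * ‖h‖ := by rw [hh₁]; exact norm_smul (((M⁻¹ : ℝ) : 𝕜)) h
    rw [this, RCLike.norm_ofReal, abs_of_pos (inv_pos.2 hMpos), ← hM,
      inv_mul_cancel₀ hMpos.ne']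
  -- the rank-one operator and the alternative Daugavet property
  set T : X →L[𝕜] X := h₁.smulRight x with hT
  have hTnorm : ‖T‖ = 1 := by
    rw [hT, ContinuousLinearMap.norm_smulRight_apply, hh₁norm, hx, mul_one]
  have hRank : RankOne 𝕜 T := ⟨h₁, x, fun z => rfl⟩
  obtain ⟨θ₀, hθ₀, hBnorm⟩ := (hX T hRank).1
  set B := ContinuousLinearMap.id 𝕜 X + θ₀ • T with hB
  have hθ₀ne : θ₀ ≠ 0 := by
    intro hcon; rw [hcon, norm_zero] at hθ₀; norm_num at hθ₀
  have hBnorm2 : ‖B‖ = 2 := by rw [hB, ← hBnorm, hTnorm]; norm_num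
  -- the small parameter
  set η' := min (ε / 4) (min (ε₀ / (4 * L)) (4⁻¹ : ℝ)) with hη'
  have hη'pos : 0 < η' := by
    apply lt_min (by positivity) (lt_min (by positivity) (by norm_num))
  have hη'le : η' ≤ 4⁻¹ := le_trans (min_le_right _ _) (min_le_right _ _)
  have hη'ε : η' ≤ ε / 4 := min_le_left _ _
  have hη'ε₀ : L * η' ≤ ε₀ / 4 := by
    have h1 : η' ≤ ε₀ / (4 * L) := le_trans (min_le_right _ _) (min_le_left _ _)
    have h2 : L * η' ≤ L * (ε₀ / (4 * L)) := mul_le_mul_of_nonneg_left h1 hLpos.le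
    have h3 : L * (ε₀ / (4 * L)) = ε₀ / 4 := by field_simp
    linarith only [h1, h2, h3]
  -- a near-norming point for B
  obtain ⟨z, hz1, hzB⟩ := B.exists_lt_apply_of_lt_opNorm
    (show (2 : ℝ) - η' < ‖B‖ by rw [hBnorm2]; linarith only [hη'pos])
  set w := h₁ z with hw
  set c := θ₀ * w with hc
  have hBz : B z = z + c • x := by
    rw [hB]
    simp only [ContinuousLinearMap.add_apply, ContinuousLinearMap.coe_id', id_eq,
      ContinuousLinearMap.coe_smul', Pi.smul_apply, hT,
      ContinuousLinearMap.smulRight_apply, smul_smul, hc, hw]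
  have hV : 2 - η' < ‖z + c • x‖ := by rw [← hBz]; exact hzB
  have hwle : ‖w‖ ≤ ‖z‖ := by
    calc ‖w‖ = ‖h₁ z‖ := rfl
    _ ≤ ‖h₁‖ * ‖z‖ := h₁.le_opNorm z
    _ = ‖z‖ := by rw [hh₁norm, one_mul]
  have hcnorm : ‖c‖ = ‖w‖ := by rw [hc, norm_mul, hθ₀, one_mul]
  have hVle : ‖z + c • x‖ ≤ ‖z‖ + ‖w‖ := by
    calc ‖z + c • x‖ ≤ ‖z‖ + ‖c • x‖ := norm_add_le _ _
    _ = ‖z‖ + ‖w‖ := by rw [norm_smul, hcnorm, hx, mul_one]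
  have hwge : 1 - η' < ‖w‖ := by linarith only [hV, hVle, hz1]
  have hzge : 1 - η' < ‖z‖ := lt_of_lt_of_le hwge hwle
  have hwpos : 0 < ‖w‖ := by
    have h14 : (4:ℝ)⁻¹ < 1 := by norm_num
    linarith only [hwge, hη'le, h14]
  have hzpos : 0 < ‖z‖ := lt_of_lt_of_le hwpos hwle
  have hwne : w ≠ 0 := norm_pos_iff.1 hwpos
  have hzne : z ≠ 0 := norm_pos_iff.1 hzpos
  have hcne : c ≠ 0 := mul_ne_zero hθ₀ne hwne
  -- the candidate point y in the Lip-slice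
  set aq : 𝕜 := ((‖w‖ : ℝ) : 𝕜) / (w * ((‖z‖ : ℝ) : 𝕜)) with haq
  set y := aq • z with hy
  have haqnorm : ‖aq‖ = ‖z‖⁻¹ := by
    rw [haq, norm_div, norm_mul, RCLike.norm_ofReal, RCLike.norm_ofReal,
      abs_of_nonneg (norm_nonneg w), abs_of_nonneg (norm_nonneg z)]
    field_simp
  have hynorm : ‖y‖ = 1 := by
    rw [hy, norm_smul, haqnorm, inv_mul_cancel₀ hzpos.ne']
  have hyne : y ≠ 0 := by rw [← norm_pos_iff, hynorm]; norm_num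
  -- y almost norms h₁
  have hrey : RCLike.re (h₁ y) = ‖w‖ / ‖z‖ := by
    have h1 : h₁ y = aq * w := by rw [hy, map_smul, smul_eq_mul, ← hw]
    have h2 : aq * w = (((‖w‖ / ‖z‖ : ℝ)) : 𝕜) := by
      have hznek : ((‖z‖ : ℝ) : 𝕜) ≠ 0 := RCLike.ofReal_ne_zero.mpr hzpos.ne'
      rw [haq, RCLike.ofReal_div]
      field_simp
    rw [h1, h2, RCLike.ofReal_re]
  -- hence auxA f y is large
  have hAy : L - ε₀ < auxA f y := by
    have hgy : g y ≤ auxA f y := hgA y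
    have h1 : RCLike.re (h₁ y) = M⁻¹ * RCLike.re (h y) := by
      rw [hh₁]
      simp only [ContinuousLinearMap.coe_smul', Pi.smul_apply, smul_eq_mul]
      rw [RCLike.re_ofReal_mul]
    have h2 : RCLike.re (h y) = g y := hre y
    have h3 : g y = M * (‖w‖ / ‖z‖) := by
      have h4 := h1
      rw [hrey, h2] at h4
      rw [h4]
      field_simp
    have h4 : ‖w‖ / ‖z‖ ≥ ‖w‖ := by
      rw [ge_iff_le, le_div_iff₀ hzpos]
      calc ‖w‖ * ‖z‖ ≤ ‖w‖ * 1 := mul_le_mul_of_nonneg_left hz1.le (norm_nonneg w)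
      _ = ‖w‖ := mul_one _
    have h5 : M * (‖w‖ / ‖z‖) ≥ M * ‖w‖ := mul_le_mul_of_nonneg_left h4 hMpos.le
    have h6 : M * ‖w‖ ≥ (L - η) * (1 - η') := by
      apply mul_le_mul hMge hwge.le (by linarith only [hη'le]) hMpos.le
    have hηε₀ : η ≤ ε₀ / 2 := min_le_left _ _
    have h7 : (L - η) * (1 - η') = L - η - L * η' + η * η' := by ring
    have h8 : 0 ≤ η * η' := by positivity
    linarith only [hgy, h3, h5, h6, h7, h8, hηε₀, hη'ε₀, hε₀]
  -- y belongs to the Lip-slice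
  have hymem : y ∈ lipSlice f ε₀ := by
    obtain ⟨rr, hrrmem, hrrgt⟩ := exists_lt_of_lt_csSup (auxSlopes_nonempty f y) hAy
    obtain ⟨v, t, ht, rfl⟩ := hrrmem
    have htys : ‖t • y‖ = t := by
      rw [norm_smul, hynorm, mul_one, Real.norm_eq_abs, abs_of_pos ht]
    have hsub : (v + t • y) - v = t • y := by abel
    refine ⟨v + t • y, v, ?_, ?_, ?_⟩
    · intro hcon
      rw [add_eq_left, smul_eq_zero] at hcon
      rcases hcon with h | h
      exacts [ht.ne' h, hyne h]
    · rw [hsub, htys, smul_smul, inv_mul_cancel₀ ht.ne', one_smul]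
    · rw [hsub, htys]
      exact hrrgt
  -- the final norm estimate
  refine ⟨y, hymem, θ₀⁻¹, by rw [norm_inv, hθ₀, inv_one], ?_⟩
  have key : c • (x + θ₀⁻¹ • y) = c • x + (((‖w‖ / ‖z‖ : ℝ)) : 𝕜) • z := by
    rw [hy, smul_add, smul_smul, smul_smul]
    congr 2
    have hznek : ((‖z‖ : ℝ) : 𝕜) ≠ 0 := RCLike.ofReal_ne_zero.mpr hzpos.ne'
    rw [hc, haq, RCLike.ofReal_div]
    field_simp
  have hns : ‖(((‖w‖ / ‖z‖ : ℝ)) : 𝕜)‖ = ‖w‖ / ‖z‖ := by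
    rw [RCLike.norm_ofReal, abs_of_nonneg (by positivity)]
  have hdiff : ‖z - (((‖w‖ / ‖z‖ : ℝ)) : 𝕜) • z‖ = ‖z‖ - ‖w‖ := by
    have h1 : z - (((‖w‖ / ‖z‖ : ℝ)) : 𝕜) • z = ((((1 : ℝ) - ‖w‖ / ‖z‖ : ℝ)) : 𝕜) • z := by
      push_cast
      rw [sub_smul, one_smul]
    rw [h1, norm_smul, RCLike.norm_ofReal, abs_of_nonneg (by
      rw [sub_nonneg, div_le_one hzpos]; exact hwle)]
    field_simp
  have hlow : ‖z‖ - ‖w‖ + ‖c • x + (((‖w‖ / ‖z‖ : ℝ)) : 𝕜) • z‖ ≥ ‖z + c • x‖ := by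
    have h1 : z + c • x = (c • x + (((‖w‖ / ‖z‖ : ℝ)) : 𝕜) • z) + (z - (((‖w‖ / ‖z‖ : ℝ)) : 𝕜) • z) := by abel
    calc ‖z + c • x‖ ≤ ‖c • x + (((‖w‖ / ‖z‖ : ℝ)) : 𝕜) • z‖ + ‖z - (((‖w‖ / ‖z‖ : ℝ)) : 𝕜) • z‖ := by
          rw [h1]; exact norm_add_le _ _
    _ = ‖c • x + (((‖w‖ / ‖z‖ : ℝ)) : 𝕜) • z‖ + (‖z‖ - ‖w‖) := by rw [hdiff]
    _ = ‖z‖ - ‖w‖ + ‖c • x + (((‖w‖ / ‖z‖ : ℝ)) : 𝕜) • z‖ := by ring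
  have hkeynorm : ‖w‖ * ‖x + θ₀⁻¹ • y‖ = ‖c • x + (((‖w‖ / ‖z‖ : ℝ)) : 𝕜) • z‖ := by
    rw [← key, norm_smul, hcnorm]
  have hw1 : ‖w‖ ≤ 1 := hwle.trans hz1.le
  have e1 : ‖w‖ * ‖x + θ₀⁻¹ • y‖ ≥ 2 - η' - (‖z‖ - ‖w‖) := by
    rw [hkeynorm]; linarith only [hlow, hV]
  have e2 : ‖w‖ * ‖x + θ₀⁻¹ • y‖ ≥ 2 - 2 * η' := by linarith only [e1, hz1, hwge]
  have e3 : (1 - ‖w‖) * ‖x + θ₀⁻¹ • y‖ ≥ 0 :=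
    mul_nonneg (by linarith only [hw1]) (norm_nonneg _)
  rw [ge_iff_le, sub_mul, one_mul, sub_nonneg] at e3
  linarith only [e2, e3, hη'ε, hε]
end

section
/- Let X be a Banach space and let A ⊆ X be a bounded set. If the closed convex hull of A is an SCD set, then A is an SCD set. -/
open Set Metric Topology

/-- If the closed convex hull of a bounded set is SCD, then so is the set itself. -/
theorem scd_of_scd_closedConvexHull {𝕜 X : Type*} [RCLike 𝕜] [NormedAddCommGroup X] [NormedSpace 𝕜 X]
    [NormedSpace ℝ X] [IsScalarTower ℝ 𝕜 X] [CompleteSpace X]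
    (A : Set X) (hA : Bornology.IsBounded A)
    (h : IsSCD 𝕜 (closure (convexHull ℝ A))) : IsSCD 𝕜 A := by
  set C := closure (convexHull ℝ A) with hC
  have hAC : A ⊆ C := (subset_convexHull ℝ A).trans subset_closure
  obtain ⟨S, hS, hmain⟩ := h
  -- For each n, the slice of C restricted to A is nonempty
  have key : ∀ n, ∃ (f : X →L[𝕜] 𝕜) (α : ℝ), f ≠ 0 ∧
      S n = {x ∈ C | α < RCLike.re (f x)} ∧
      ({x ∈ A | α < RCLike.re (f x)}).Nonempty := by
    intro n
    obtain ⟨⟨z, hz⟩, f, α, hf0, hSeq⟩ := hS n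
    refine ⟨f, α, hf0, hSeq, ?_⟩
    by_contra hempty
    push_neg at hempty
    simp only [Set.not_nonempty_iff_eq_empty, Set.eq_empty_iff_forall_notMem] at hempty
    have hAle : ∀ x ∈ A, RCLike.re (f x) ≤ α := by
      intro x hx
      by_contra hlt
      exact hempty x ⟨hx, lt_of_not_ge hlt⟩
    -- the halfspace is closed and convex
    set g : X →L[ℝ] ℝ := (RCLike.reCLM : 𝕜 →L[ℝ] ℝ).comp (f.restrictScalars ℝ) with hg
    have hgdef : ∀ x : X, g x = RCLike.re (f x) := fun x => rfl
    have hconv : Convex ℝ {x : X | g x ≤ α} :=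
      convex_halfSpace_le ⟨g.map_add, g.map_smul⟩ α
    have hclosed : IsClosed {x : X | g x ≤ α} :=
      isClosed_Iic.preimage g.continuous
    have hsub : C ⊆ {x : X | g x ≤ α} := by
      apply closure_minimal _ hclosed
      apply convexHull_min _ hconv
      intro x hx
      exact hAle x hx
    rw [hSeq] at hz
    exact absurd hz.2 (not_lt.mpr (hsub hz.1))
  choose f α hf0 hSeq hne using key
  refine ⟨fun n => {x ∈ A | α n < RCLike.re (f n x)}, fun n => ⟨hne n, f n, α n, hf0 n, rfl⟩, ?_⟩
  intro B hBA hBint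
  have hBC : B ⊆ C := hBA.trans hAC
  have : C ⊆ closure (convexHull ℝ B) := by
    apply hmain B hBC
    intro n
    obtain ⟨x, hxB, hxS⟩ := hBint n
    exact ⟨x, hxB, by rw [hSeq n]; exact ⟨hAC hxS.1, hxS.2⟩⟩
  exact fun x hx => this (hAC hx)
end

section
/- Let X be a Banach space with the Daugavet property and let T: X → X be a Lipschitz map. Then there is a closed separable linear subspace E ⊆ X having the Daugavet property such that T(E) ⊆ E and the Lipschitz seminorm of the restriction T|_E equals the Lipschitz seminorm of T. -/
open Set Metric Topology

section DaugavetAux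

set_option linter.unusedSectionVars false
set_option maxHeartbeats 2000000

variable {𝕜 X : Type*} [RCLike 𝕜] [NormedAddCommGroup X] [NormedSpace 𝕜 X]
  [NormedSpace ℝ X] [IsScalarTower ℝ 𝕜 X]

lemma dp_nontrivial (h : DaugavetProperty 𝕜 X) : Nontrivial X := by
  by_contra hn
  rw [not_nontrivial_iff_subsingleton] at hn
  have h0 := h 0 ⟨0, 0, by simp⟩
  have hid : (ContinuousLinearMap.id 𝕜 X + 0) = (0 : X →L[𝕜] X) :=
    ContinuousLinearMap.ext fun x => Subsingleton.elim _ _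
  rw [hid] at h0
  simp at h0

lemma exists_norm_one_apply_gt {Z : Type*} [NormedAddCommGroup Z] [NormedSpace 𝕜 Z]
    (A : X →L[𝕜] Z) {t : ℝ} (ht : 0 ≤ t) (h : t < ‖A‖) : ∃ y : X, ‖y‖ = 1 ∧ t < ‖A y‖ := by
  by_contra hc
  push_neg at hc
  have : ‖A‖ ≤ t := by
    refine A.opNorm_le_bound ht fun y => ?_
    rcases eq_or_ne y 0 with rfl | hy
    · simp
    · have hny : ‖y‖ ≠ 0 := norm_ne_zero_iff.mpr hy
      have h1 : ‖((‖y‖ : 𝕜))⁻¹ • y‖ = 1 := by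
        rw [norm_smul, norm_inv, RCLike.norm_ofReal, abs_of_nonneg (norm_nonneg y),
          inv_mul_cancel₀ hny]
      have h2 := hc _ h1
      rw [map_smul, norm_smul, norm_inv, RCLike.norm_ofReal, abs_of_nonneg (norm_nonneg y)] at h2
      have h3 : ‖y‖⁻¹ * ‖A y‖ ≤ t := h2
      calc ‖A y‖ = ‖y‖ * (‖y‖⁻¹ * ‖A y‖) := by field_simp
      _ ≤ ‖y‖ * t := mul_le_mul_of_nonneg_left h3 (norm_nonneg y)
      _ = t * ‖y‖ := mul_comm _ _
  linarith

lemma slice_of_dp (hX : DaugavetProperty 𝕜 X) (g : X →L[𝕜] 𝕜) (hg : ‖g‖ = 1)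
    (x : X) (hx : ‖x‖ = 1) {δ : ℝ} (hδ : 0 < δ) (hδ1 : δ < 1) :
    ∃ z : X, ‖z‖ ≤ 1 ∧ 1 - δ < RCLike.re (g z) ∧ 2 - 2 * δ < ‖x + z‖ := by
  set T := g.smulRight x with hTdef
  have hT : ‖T‖ = 1 := by
    rw [hTdef, ContinuousLinearMap.norm_smulRight_apply, hg, hx, one_mul]
  have hD := hX T ⟨g, x, fun y => rfl⟩
  rw [hT] at hD
  have h2 : (2 : ℝ) - δ < ‖ContinuousLinearMap.id 𝕜 X + T‖ := by rw [hD]; linarith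
  obtain ⟨y, hy1, hy2⟩ := exists_norm_one_apply_gt (ContinuousLinearMap.id 𝕜 X + T)
    (by linarith : (0:ℝ) ≤ 2 - δ) h2
  have hy2' : 2 - δ < ‖y + g y • x‖ := by
    simpa [T, ContinuousLinearMap.add_apply] using hy2
  set a := g y with ha
  have ha1 : ‖a‖ ≤ 1 := by
    calc ‖a‖ ≤ ‖g‖ * ‖y‖ := g.le_opNorm y
    _ = 1 := by rw [hg, hy1, one_mul]
  have ha2 : 1 - δ < ‖a‖ := by
    have : ‖y + a • x‖ ≤ ‖y‖ + ‖a‖ * ‖x‖ := by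
      calc ‖y + a • x‖ ≤ ‖y‖ + ‖a • x‖ := norm_add_le _ _
      _ = ‖y‖ + ‖a‖ * ‖x‖ := by rw [norm_smul]
    rw [hy1, hx, mul_one] at this
    linarith
  have ha0 : a ≠ 0 := by
    intro h; rw [h, norm_zero] at ha2; linarith
  set θ : 𝕜 := (‖a‖ : 𝕜) / a with hθdef
  have hθ : ‖θ‖ = 1 := by
    rw [hθdef, norm_div, RCLike.norm_ofReal, abs_of_nonneg (norm_nonneg a),
      div_self (norm_ne_zero_iff.mpr ha0)]
  have hθa : θ * a = (‖a‖ : 𝕜) := div_mul_cancel₀ _ ha0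
  refine ⟨θ • y, ?_, ?_, ?_⟩
  · rw [norm_smul, hθ, hy1, one_mul]
  · rw [map_smul, smul_eq_mul, ← ha, hθa, RCLike.ofReal_re]
    exact ha2
  · have h5 : 2 - δ < ‖θ • y + (‖a‖ : 𝕜) • x‖ := by
      have : θ • y + (‖a‖ : 𝕜) • x = θ • (y + a • x) := by
        rw [smul_add, ← hθa, mul_smul]
      rw [this, norm_smul, hθ, one_mul]
      exact hy2'
    have h6 : ‖x - (‖a‖ : 𝕜) • x‖ ≤ δ := by
      have : x - (‖a‖ : 𝕜) • x = ((1 - ‖a‖ : ℝ) : 𝕜) • x := by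
        push_cast
        rw [sub_smul, one_smul]
      rw [this, norm_smul, RCLike.norm_ofReal, hx, mul_one,
        abs_of_nonneg (by linarith : (0:ℝ) ≤ 1 - ‖a‖)]
      linarith
    have h7 : ‖θ • y + (‖a‖:𝕜) • x‖ ≤ ‖x + θ • y‖ + ‖x - (‖a‖:𝕜) • x‖ := by
      have heq : θ • y + (‖a‖:𝕜) • x = (x + θ • y) - (x - (‖a‖:𝕜) • x) := by abel
      rw [heq]
      exact norm_sub_le _ _
    linarith

lemma isLinearMap_re_comp (g : X →L[𝕜] 𝕜) :
    IsLinearMap ℝ (fun v : X => RCLike.re (g v)) := by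
  constructor
  · intro u v; rw [map_add, map_add]
  · intro r v
    rw [← algebraMap_smul 𝕜 r v, map_smul, algebraMap_smul, RCLike.smul_re, smul_eq_mul]

lemma conv_of_dp (hX : DaugavetProperty 𝕜 X) (x : X) (hx : ‖x‖ = 1) {ε : ℝ} (hε : 0 < ε)
    (b : X) (hb : ‖b‖ ≤ 1) :
    b ∈ closure (convexHull ℝ {y : X | ‖y‖ ≤ 1 ∧ 2 - ε < ‖x + y‖}) := by
  by_contra hbC
  set D := {y : X | ‖y‖ ≤ 1 ∧ 2 - ε < ‖x + y‖} with hD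
  obtain ⟨f, u, hfC, hfb⟩ := geometric_hahn_banach_closed_point
    ((convex_convexHull ℝ D).closure) isClosed_closure hbC
  have hxD : x ∈ D := by
    refine ⟨le_of_eq hx, ?_⟩
    have : x + x = (2 : ℝ) • x := by rw [two_smul]
    rw [this, norm_smul, hx, mul_one]
    simp only [Real.norm_ofNat]
    linarith
  have hfx : f x < u := hfC x (subset_closure (subset_convexHull ℝ D hxD))
  have hfne : f ≠ 0 := by
    intro h
    rw [h] at hfx hfb
    simp at hfx hfb
    linarith
  have hf0 : 0 < ‖f‖ := norm_pos_iff.mpr hfne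
  obtain ⟨g, hgdef⟩ : ∃ g : X →L[𝕜] 𝕜, g = f.extendTo𝕜' := ⟨_, rfl⟩
  have hgf : ‖g‖ = ‖f‖ := by rw [hgdef]; exact ContinuousLinearMap.norm_extendTo𝕜' f
  have hgre : ∀ v : X, RCLike.re (g v) = f v := fun v => by
    rw [hgdef]; exact f.extendTo𝕜'_apply_re v
  have huf : u < ‖f‖ := by
    have : f b ≤ ‖f‖ := by
      calc f b ≤ |f b| := le_abs_self _
      _ = ‖f b‖ := rfl
      _ ≤ ‖f‖ * ‖b‖ := f.le_opNorm b
      _ ≤ ‖f‖ * 1 := mul_le_mul_of_nonneg_left hb (norm_nonneg f)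
      _ = ‖f‖ := mul_one _
    linarith
  obtain ⟨δ, hδdef⟩ : ∃ δ : ℝ, δ = min (min (ε / 2) 2⁻¹) ((‖f‖ - u) / (2 * ‖f‖)) := ⟨_, rfl⟩
  have hδpos : 0 < δ := by
    rw [hδdef]
    exact lt_min (lt_min (by linarith) (by norm_num)) (div_pos (by linarith) (by positivity))
  have hδ1 : δ < 1 := by
    have : δ ≤ 2⁻¹ := hδdef ▸ le_trans (min_le_left _ _) (min_le_right _ _)
    linarith
  obtain ⟨g1, hg1def⟩ : ∃ g1 : X →L[𝕜] 𝕜, g1 = ‖f‖⁻¹ • g := ⟨_, rfl⟩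
  have hg1 : ‖g1‖ = 1 := by
    have h := norm_smul (α := ℝ) (β := X →L[𝕜] 𝕜) ‖f‖⁻¹ g
    rw [hg1def, h, hgf, norm_inv, Real.norm_eq_abs, abs_of_pos hf0,
      inv_mul_cancel₀ (ne_of_gt hf0)]
  obtain ⟨z, hz1, hz2, hz3⟩ := slice_of_dp hX g1 hg1 x hx hδpos hδ1
  have hzD : z ∈ D := by
    refine ⟨hz1, ?_⟩
    have hδε : δ ≤ ε / 2 := hδdef ▸ le_trans (min_le_left _ _) (min_le_left _ _)
    linarith
  have hzu : f z < u := hfC z (subset_closure (subset_convexHull ℝ D hzD))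
  have hre : RCLike.re (g1 z) = ‖f‖⁻¹ * f z := by
    have h1 : g1 z = ‖f‖⁻¹ • (g z) := by rw [hg1def]; rfl
    rw [h1, RCLike.smul_re, hgre]
  have hδu : δ ≤ (‖f‖ - u) / (2 * ‖f‖) := hδdef ▸ min_le_right _ _
  have hkey : ‖f‖ * (1 - δ) > u := by
    rw [le_div_iff₀ (by positivity : (0:ℝ) < 2 * ‖f‖)] at hδu
    linarith
  have hfz : f z = ‖f‖ * RCLike.re (g1 z) := by
    rw [hre]
    field_simp
  rw [hfz] at hzu
  have h2 : ‖f‖ * (1 - δ) < ‖f‖ * RCLike.re (g1 z) := mul_lt_mul_of_pos_left hz2 hf0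
  linarith

lemma dp_of_conv [Nontrivial X]
    (H : ∀ x : X, ‖x‖ = 1 → ∀ ε : ℝ, 0 < ε → ∀ b : X, ‖b‖ ≤ 1 →
      b ∈ closure (convexHull ℝ {y : X | ‖y‖ ≤ 1 ∧ 2 - ε < ‖x + y‖})) :
    DaugavetProperty 𝕜 X := by
  intro S hS
  obtain ⟨g, u, hgu⟩ := hS
  have hSeq : S = g.smulRight u := ContinuousLinearMap.ext fun y => by
    rw [hgu y, ContinuousLinearMap.smulRight_apply]
  have hSnorm : ‖S‖ = ‖g‖ * ‖u‖ := by
    rw [hSeq, ContinuousLinearMap.norm_smulRight_apply]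
  have hid : ‖ContinuousLinearMap.id 𝕜 X‖ = 1 := ContinuousLinearMap.norm_id
  have hub : ‖ContinuousLinearMap.id 𝕜 X + S‖ ≤ 1 + ‖S‖ :=
    le_trans (norm_add_le _ _) (by rw [hid])
  refine le_antisymm hub ?_
  rcases eq_or_ne (‖g‖ * ‖u‖) 0 with hc0 | hcne
  · have hS0 : ‖S‖ = 0 := by rw [hSnorm, hc0]
    have h1 : (1:ℝ) ≤ ‖ContinuousLinearMap.id 𝕜 X + S‖ + ‖S‖ := by
      calc (1:ℝ) = ‖ContinuousLinearMap.id 𝕜 X‖ := hid.symm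
      _ = ‖(ContinuousLinearMap.id 𝕜 X + S) - S‖ := by rw [add_sub_cancel_right]
      _ ≤ ‖ContinuousLinearMap.id 𝕜 X + S‖ + ‖S‖ := norm_sub_le _ _
    rw [hS0] at h1 ⊢
    linarith
  · have hg0 : 0 < ‖g‖ := by
      rcases (mul_ne_zero_iff.mp hcne) with ⟨h1, _⟩
      exact lt_of_le_of_ne (norm_nonneg g) (Ne.symm h1)
    have hu0 : 0 < ‖u‖ := by
      rcases (mul_ne_zero_iff.mp hcne) with ⟨_, h2⟩
      exact lt_of_le_of_ne (norm_nonneg u) (Ne.symm h2)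
    have hune : u ≠ 0 := norm_pos_iff.mp hu0
    obtain ⟨c, hcdef⟩ : ∃ c : ℝ, c = ‖g‖ * ‖u‖ := ⟨_, rfl⟩
    have hc : 0 < c := hcdef ▸ mul_pos hg0 hu0
    obtain ⟨v, hvdef⟩ : ∃ v : X, v = ‖u‖⁻¹ • u := ⟨_, rfl⟩
    have hv1 : ‖v‖ = 1 := by
      rw [hvdef, norm_smul, norm_inv, Real.norm_eq_abs, abs_of_pos hu0,
        inv_mul_cancel₀ (ne_of_gt hu0)]
    have main : ∀ s : ℝ, 0 < s → s ≤ 1/2 →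
        1 + c - (1 + 3*c)*s ≤ ‖ContinuousLinearMap.id 𝕜 X + S‖ := by
      intro s hs hs2
      have hs1 : s ≤ 1 := by linarith
      have hsq : 0 < s^2 := by positivity
      have hsq1 : s^2 ≤ s := by nlinarith
      have ht0 : (0:ℝ) ≤ ‖g‖ * (1 - s^2) := by nlinarith
      have htlt : ‖g‖ * (1 - s^2) < ‖g‖ := by nlinarith
      obtain ⟨y₀, hy₀, hgy₀⟩ := exists_norm_one_apply_gt g ht0 htlt
      have hgy0pos : 0 < ‖g y₀‖ := lt_of_le_of_lt ht0 hgy₀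
      have hgy0ne : g y₀ ≠ 0 := norm_pos_iff.mp hgy0pos
      obtain ⟨θ, hθdef⟩ : ∃ θ : 𝕜, θ = (‖g y₀‖ : 𝕜) / (g y₀) := ⟨_, rfl⟩
      have hθ1 : ‖θ‖ = 1 := by
        rw [hθdef, norm_div, RCLike.norm_ofReal, abs_of_pos hgy0pos,
          div_self (ne_of_gt hgy0pos)]
      obtain ⟨y₁, hy₁def⟩ : ∃ y₁ : X, y₁ = θ • y₀ := ⟨_, rfl⟩
      have hy₁1 : ‖y₁‖ = 1 := by rw [hy₁def, norm_smul, hθ1, hy₀, one_mul]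
      have hgy₁ : g y₁ = (‖g y₀‖ : 𝕜) := by
        rw [hy₁def, map_smul, hθdef, smul_eq_mul, div_mul_cancel₀ _ hgy0ne]
      have hmem := H v hv1 (s^2) hsq y₁ (le_of_eq hy₁1)
      rw [Metric.mem_closure_iff] at hmem
      obtain ⟨w, hw, hwd⟩ := hmem (s^2) hsq
      rw [dist_eq_norm] at hwd
      have hgww : ‖g y₁ - g w‖ ≤ ‖g‖ * s^2 := by
        rw [← map_sub]
        calc ‖g (y₁ - w)‖ ≤ ‖g‖ * ‖y₁ - w‖ := g.le_opNorm _
        _ ≤ ‖g‖ * s^2 := mul_le_mul_of_nonneg_left (le_of_lt hwd) (le_of_lt hg0)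
      have hrew : ‖g‖ * (1 - 2*s^2) < RCLike.re (g w) := by
        have h1 : RCLike.re (g y₁) = ‖g y₀‖ := by rw [hgy₁, RCLike.ofReal_re]
        have h2 : RCLike.re (g y₁) - RCLike.re (g w) ≤ ‖g‖ * s^2 := by
          calc RCLike.re (g y₁) - RCLike.re (g w) = RCLike.re (g y₁ - g w) := by
                rw [map_sub]
          _ ≤ |RCLike.re (g y₁ - g w)| := le_abs_self _
          _ ≤ ‖g y₁ - g w‖ := RCLike.abs_re_le_norm _
          _ ≤ ‖g‖ * s^2 := hgww
        nlinarith
      obtain ⟨z, hzmem, hzre⟩ : ∃ z ∈ {y : X | ‖y‖ ≤ 1 ∧ 2 - s^2 < ‖v + y‖},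
          ‖g‖ * (1 - 2*s^2) < RCLike.re (g z) := by
        by_contra hno
        push_neg at hno
        have hsub : convexHull ℝ {y : X | ‖y‖ ≤ 1 ∧ 2 - s^2 < ‖v + y‖} ⊆
            {y : X | RCLike.re (g y) ≤ ‖g‖ * (1 - 2*s^2)} :=
          convexHull_min hno (convex_halfSpace_le (isLinearMap_re_comp g) _)
        exact absurd (hsub hw) (not_le.mpr hrew)
      obtain ⟨hz1, hz2⟩ := hzmem
      have hgz_le : ‖g z‖ ≤ ‖g‖ := by
        calc ‖g z‖ ≤ ‖g‖ * ‖z‖ := g.le_opNorm z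
        _ ≤ ‖g‖ * 1 := mul_le_mul_of_nonneg_left hz1 (le_of_lt hg0)
        _ = ‖g‖ := mul_one _
      have hkb : ‖g z - (‖g‖ : 𝕜)‖ ≤ 2 * ‖g‖ * s := by
        have e1 : ‖g z - (‖g‖ : 𝕜)‖^2 =
            (RCLike.re (g z) - ‖g‖)^2 + (RCLike.im (g z))^2 := by
          rw [RCLike.norm_sq_eq_def, map_sub, map_sub, RCLike.ofReal_re, RCLike.ofReal_im]
          ring
        have e2 : RCLike.re (g z)^2 + RCLike.im (g z)^2 = ‖g z‖^2 := by
          rw [RCLike.norm_sq_eq_def]; ring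
        have h1 : ‖g z‖^2 ≤ ‖g‖^2 := by
          have := norm_nonneg (g z)
          nlinarith [hgz_le]
        have h2 : ‖g‖ * (‖g‖ * (1 - 2*s^2)) ≤ ‖g‖ * RCLike.re (g z) :=
          mul_le_mul_of_nonneg_left (le_of_lt hzre) (le_of_lt hg0)
        have e3 : ‖g z - (‖g‖ : 𝕜)‖^2 ≤ (2*‖g‖*s)^2 := by
          rw [e1]
          have key : (RCLike.re (g z) - ‖g‖)^2 + (RCLike.im (g z))^2 =
              ‖g z‖^2 + ‖g‖^2 - 2*(‖g‖ * RCLike.re (g z)) := by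
            rw [← e2]; ring
          rw [key]
          have expand : (2*‖g‖*s)^2 = 4*(‖g‖*‖g‖)*s^2 := by ring
          rw [expand]
          have h2' : ‖g‖*‖g‖ - 2*((‖g‖*‖g‖)*s^2) ≤ ‖g‖ * RCLike.re (g z) := by
            have : ‖g‖ * (‖g‖ * (1 - 2*s^2)) = ‖g‖*‖g‖ - 2*((‖g‖*‖g‖)*s^2) := by ring
            linarith [h2, this ▸ h2]
          have h1' : ‖g z‖^2 ≤ ‖g‖*‖g‖ := by nlinarith [h1]
          linarith
        have h4 : (0:ℝ) ≤ 2*‖g‖*s := by positivity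
        have h5 := Real.sqrt_le_sqrt e3
        rwa [Real.sqrt_sq (norm_nonneg _), Real.sqrt_sq h4] at h5
      have hczu : 1 + c - (1+c)*s^2 ≤ ‖z + c • v‖ := by
        rcases le_or_gt c 1 with hcle | hclt
        · have e1 : ‖v - c • v‖ = 1 - c := by
            have : v - c • v = (1 - c) • v := by rw [sub_smul, one_smul]
            rw [this, norm_smul, Real.norm_eq_abs, abs_of_nonneg (by linarith), hv1, mul_one]
          have e2 : ‖v + z‖ ≤ ‖z + c • v‖ + ‖v - c • v‖ := by
            have heq : v + z = (z + c • v) + (v - c • v) := by abel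
            rw [heq]; exact norm_add_le _ _
          rw [e1] at e2
          have : 2 - s^2 < ‖v + z‖ := hz2
          nlinarith
        · have e1 : ‖c • (v + z)‖ = c * ‖v + z‖ := by
            rw [norm_smul, Real.norm_eq_abs, abs_of_pos hc]
          have e2 : ‖(c - 1) • z‖ ≤ c - 1 := by
            rw [norm_smul, Real.norm_eq_abs, abs_of_nonneg (by linarith)]
            nlinarith
          have heq : c • (v + z) = (z + c • v) + (c - 1) • z := by
            rw [smul_add, sub_smul, one_smul]; abel
          have e3 : ‖c • (v + z)‖ ≤ ‖z + c • v‖ + ‖(c - 1) • z‖ := by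
            rw [heq]; exact norm_add_le _ _
          have e4 : c * (2 - s^2) ≤ c * ‖v + z‖ :=
            mul_le_mul_of_nonneg_left (le_of_lt hz2) (le_of_lt hc)
          rw [e1] at e3
          nlinarith
      have hcv : c • v = ((‖g‖ : ℝ) : 𝕜) • u := by
        rw [hvdef, smul_smul, algebraMap_smul]
        congr 1
        rw [hcdef]
        field_simp
      have hpert : ‖g z • u - c • v‖ ≤ 2 * c * s := by
        rw [hcv, ← sub_smul, norm_smul]
        calc ‖g z - ((‖g‖ : ℝ) : 𝕜)‖ * ‖u‖ ≤ (2 * ‖g‖ * s) * ‖u‖ :=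
            mul_le_mul_of_nonneg_right hkb (norm_nonneg u)
        _ = 2 * c * s := by rw [hcdef]; ring
      have happ : (ContinuousLinearMap.id 𝕜 X + S) z = z + g z • u := by
        rw [ContinuousLinearMap.add_apply, ContinuousLinearMap.id_apply, hgu z]
      have e5 : ‖z + c • v‖ ≤ ‖z + g z • u‖ + ‖g z • u - c • v‖ := by
        have heq : z + c • v = (z + g z • u) - (g z • u - c • v) := by abel
        rw [heq]; exact norm_sub_le _ _
      have e6 : 1 + c - (1+c)*s^2 - 2*c*s ≤ ‖z + g z • u‖ := by linarith
      have e7 : ‖z + g z • u‖ ≤ ‖ContinuousLinearMap.id 𝕜 X + S‖ := by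
        calc ‖z + g z • u‖ = ‖(ContinuousLinearMap.id 𝕜 X + S) z‖ := by rw [happ]
        _ ≤ ‖ContinuousLinearMap.id 𝕜 X + S‖ * ‖z‖ := ContinuousLinearMap.le_opNorm _ _
        _ ≤ ‖ContinuousLinearMap.id 𝕜 X + S‖ * 1 :=
            mul_le_mul_of_nonneg_left hz1 (norm_nonneg _)
        _ = ‖ContinuousLinearMap.id 𝕜 X + S‖ := mul_one _
      nlinarith
    rw [hSnorm, ← hcdef]
    refine le_of_forall_pos_le_add fun η hη => ?_
    obtain ⟨s, hsdef⟩ : ∃ s : ℝ, s = min (1/2) (η/(1+3*c)) := ⟨_, rfl⟩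
    have hspos : 0 < s := by
      rw [hsdef]
      exact lt_min (by norm_num) (div_pos hη (by linarith))
    have hs2 : s ≤ 1/2 := hsdef ▸ min_le_left _ _
    have hmain := main s hspos hs2
    have hsle : (1+3*c)*s ≤ η := by
      have h1 : s ≤ η/(1+3*c) := hsdef ▸ min_le_right _ _
      rw [le_div_iff₀ (by linarith : (0:ℝ) < 1+3*c)] at h1
      linarith
    linarith

/-- The set of "good directions" for the Daugavet estimate. -/
def dgSet (x : X) (ε : ℝ) : Set X := {y : X | ‖y‖ ≤ 1 ∧ 2 - ε < ‖x + y‖}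

lemma norm_normalize {a : X} (ha : a ≠ 0) : ‖(‖a‖⁻¹ • a : X)‖ = 1 := by
  have h : ‖a‖ ≠ 0 := norm_ne_zero_iff.mpr ha
  rw [norm_smul, norm_inv, Real.norm_eq_abs, abs_of_nonneg (norm_nonneg a),
    inv_mul_cancel₀ h]

lemma normalize_close {a x : X} (ha : a ≠ 0) (hx : ‖x‖ = 1) :
    ‖(‖a‖⁻¹ • a : X) - x‖ ≤ 2 * ‖a - x‖ := by
  have h : ‖a‖ ≠ 0 := norm_ne_zero_iff.mpr ha
  have h1 : ‖(‖a‖⁻¹ • a : X) - a‖ = |1 - ‖a‖| := by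
    have e : (‖a‖⁻¹ • a : X) - a = (‖a‖⁻¹ - 1) • a := by rw [sub_smul, one_smul]
    rw [e, norm_smul, Real.norm_eq_abs]
    rw [← abs_of_nonneg (norm_nonneg a), ← abs_mul]
    congr 1
    field_simp
    rw [abs_of_nonneg (norm_nonneg a)]; ring
  have h2 : |1 - ‖a‖| ≤ ‖a - x‖ := by
    calc |1 - ‖a‖| = |‖x‖ - ‖a‖| := by rw [hx]
    _ ≤ ‖x - a‖ := abs_norm_sub_norm_le x a
    _ = ‖a - x‖ := norm_sub_rev _ _
  calc ‖(‖a‖⁻¹ • a : X) - x‖ ≤ ‖(‖a‖⁻¹ • a : X) - a‖ + ‖a - x‖ := by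
        have e : (‖a‖⁻¹ • a : X) - x = ((‖a‖⁻¹ • a : X) - a) + (a - x) := by abel
        rw [e]; exact norm_add_le _ _
  _ ≤ ‖a - x‖ + ‖a - x‖ := by rw [h1]; linarith [h2]
  _ = 2 * ‖a - x‖ := by ring

structure DStep (𝕜 : Type*) [RCLike 𝕜] {X : Type*} [NormedAddCommGroup X] [NormedSpace 𝕜 X]
    [NormedSpace ℝ X] (T : X → X) (p q : Set X × Set X) : Prop where
  hD : p.1 ⊆ q.1
  hQ : p.2 ⊆ q.2
  cD : q.1.Countable
  cQ : q.2.Countable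
  hQspan : q.2 ⊆ (Submodule.span 𝕜 q.1 : Set X)
  hdense : (Submodule.span 𝕜 p.1 : Set X) ⊆ closure q.2
  hT : ∀ a ∈ p.2, T a ∈ q.1
  hconv : ∀ a ∈ p.2, a ≠ 0 → ∀ b ∈ p.2, ‖b‖ ≤ 1 → ∀ j m : ℕ,
    ∃ z ∈ convexHull ℝ (q.1 ∩ dgSet (‖a‖⁻¹ • a) (((j:ℝ)+1)⁻¹)), ‖b - z‖ < ((m:ℝ)+1)⁻¹

lemma exists_dstep (hX : DaugavetProperty 𝕜 X) (T : X → X) (p : Set X × Set X)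
    (hc1 : p.1.Countable) (hc2 : p.2.Countable)
    (hQsub : p.2 ⊆ (Submodule.span 𝕜 p.1 : Set X)) :
    ∃ q : Set X × Set X, DStep 𝕜 T p q := by
  have hsep : TopologicalSpace.IsSeparable (Submodule.span 𝕜 p.1 : Set X) :=
    (hc1.isSeparable).span
  obtain ⟨R, hRsub, hRcnt, hRdense⟩ := hsep.exists_countable_dense_subset
  have key : ∀ x : X × X × ℕ × ℕ, ∃ F : Set X, F.Finite ∧
      (x.1 ≠ 0 → ‖x.2.1‖ ≤ 1 → (F ⊆ dgSet (‖x.1‖⁻¹ • x.1) (((x.2.2.1:ℝ)+1)⁻¹) ∧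
        ∃ z ∈ convexHull ℝ F, ‖x.2.1 - z‖ < ((x.2.2.2:ℝ)+1)⁻¹)) := by
    rintro ⟨a, b, j, m⟩
    by_cases h : a ≠ 0 ∧ ‖b‖ ≤ 1
    · obtain ⟨ha, hb⟩ := h
      have hna : ‖(‖a‖⁻¹ • a : X)‖ = 1 := norm_normalize ha
      have hjpos : (0:ℝ) < ((j:ℝ)+1)⁻¹ := by positivity
      have hmem := conv_of_dp hX _ hna hjpos b hb
      rw [Metric.mem_closure_iff] at hmem
      obtain ⟨z, hz, hzd⟩ := hmem ((m:ℝ)+1)⁻¹ (by positivity)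
      rw [dist_eq_norm] at hzd
      rw [convexHull_eq_union_convexHull_finite_subsets] at hz
      simp only [Set.mem_iUnion] at hz
      obtain ⟨t, ht, hzt⟩ := hz
      exact ⟨↑t, t.finite_toSet, fun _ _ => ⟨ht, z, hzt, hzd⟩⟩
    · exact ⟨∅, Set.finite_empty, fun h1 h2 => absurd ⟨h1, h2⟩ h⟩
  choose F hFfin hFspec using key
  obtain ⟨s, hsdef⟩ : ∃ s : Set (X × X × ℕ × ℕ),
      s = p.2 ×ˢ (p.2 ×ˢ (Set.univ : Set (ℕ × ℕ))) := ⟨_, rfl⟩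
  have hscnt : s.Countable := by
    rw [hsdef]
    exact hc2.prod (hc2.prod Set.countable_univ)
  refine ⟨(p.1 ∪ (T '' p.2 ∪ ⋃ x ∈ s, F x), p.2 ∪ R), ?_, ?_, ?_, ?_, ?_, ?_, ?_, ?_⟩
  · exact Set.subset_union_left
  · exact Set.subset_union_left
  · exact hc1.union ((hc2.image T).union (hscnt.biUnion fun x _ => (hFfin x).countable))
  · exact hc2.union hRcnt
  · intro y hy
    have h1 : p.2 ∪ R ⊆ (Submodule.span 𝕜 p.1 : Set X) := Set.union_subset hQsub hRsub
    have h2 : (Submodule.span 𝕜 p.1 : Set X) ⊆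
        (Submodule.span 𝕜 (p.1 ∪ (T '' p.2 ∪ ⋃ x ∈ s, F x)) : Set X) :=
      SetLike.coe_subset_coe.mpr (Submodule.span_mono Set.subset_union_left)
    exact h2 (h1 hy)
  · exact hRdense.trans (closure_mono Set.subset_union_right)
  · intro a ha
    exact Set.subset_union_right (Set.mem_union_left _ (Set.mem_image_of_mem T ha))
  · intro a ha ha0 b hb hbn j m
    have hxmem : (a, b, j, m) ∈ s := by
      rw [hsdef]
      exact ⟨ha, hb, Set.mem_univ _⟩
    obtain ⟨hsub, z, hz, hzd⟩ := hFspec (a, b, j, m) ha0 hbn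
    refine ⟨z, ?_, hzd⟩
    apply convexHull_mono ?_ hz
    intro y hy
    exact ⟨Set.mem_union_right _ (Set.mem_union_right _ (Set.mem_biUnion hxmem hy)), hsub hy⟩

lemma conv_transfer (E : Submodule 𝕜 X) (hEc : IsClosed (E : Set X))
    (H : ∀ x : X, x ∈ E → ‖x‖ = 1 → ∀ ε : ℝ, 0 < ε → ∀ b : X, b ∈ E → ‖b‖ ≤ 1 →
      b ∈ closure (convexHull ℝ ((E : Set X) ∩ dgSet x ε))) :
    ∀ x : ↥E, ‖x‖ = 1 → ∀ ε : ℝ, 0 < ε → ∀ b : ↥E, ‖b‖ ≤ 1 →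
      b ∈ closure (convexHull ℝ {y : ↥E | ‖y‖ ≤ 1 ∧ 2 - ε < ‖x + y‖}) := by
  intro x hx ε hε b hb
  obtain ⟨ι, hι⟩ : ∃ ι : ↥E →ₗ[ℝ] X, ⇑ι = (Subtype.val : ↥E → X) :=
    ⟨{ toFun := Subtype.val, map_add' := fun _ _ => rfl, map_smul' := fun _ _ => rfl }, rfl⟩
  obtain ⟨S, hSdef⟩ : ∃ S : Set ↥E, S = {y : ↥E | ‖y‖ ≤ 1 ∧ 2 - ε < ‖x + y‖} := ⟨_, rfl⟩
  have himg : Subtype.val '' S = (E : Set X) ∩ dgSet (x : X) ε := by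
    rw [hSdef]
    ext y
    constructor
    · rintro ⟨w, ⟨hw1, hw2⟩, rfl⟩
      exact ⟨w.2, hw1, hw2⟩
    · rintro ⟨hyE, hy1, hy2⟩
      exact ⟨⟨y, hyE⟩, ⟨hy1, hy2⟩, rfl⟩
  have h1 := H (x : X) x.2 hx ε hε (b : X) b.2 hb
  have e1 : convexHull ℝ ((E : Set X) ∩ dgSet (x : X) ε) = Subtype.val '' (convexHull ℝ S) := by
    rw [← himg, ← hι, ι.image_convexHull]
  have e2 : closure (Subtype.val '' (convexHull ℝ S)) =
      Subtype.val '' closure (convexHull ℝ S) :=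
    (hEc.isClosedEmbedding_subtypeVal).closure_image_eq _
  rw [e1, e2] at h1
  obtain ⟨w, hw, hwb⟩ := h1
  have hwbeq : w = b := Subtype.ext hwb
  rw [← hSdef]
  exact hwbeq ▸ hw

end DaugavetAux


/-- Separable determination of the Daugavet property with respect to a Lipschitz map. -/
theorem separable_determination_daugavet {𝕜 X : Type*} [RCLike 𝕜] [NormedAddCommGroup X] [NormedSpace 𝕜 X]
    [NormedSpace ℝ X] [IsScalarTower ℝ 𝕜 X] [CompleteSpace X]
    (hX : DaugavetProperty 𝕜 X) (T : X → X) (hT : ∃ C, LipschitzWith C T) :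
    ∃ E : Submodule 𝕜 X, IsClosed (E : Set X) ∧
      TopologicalSpace.IsSeparable (E : Set X) ∧ DaugavetProperty 𝕜 ↥E ∧
      (∀ x ∈ E, T x ∈ E) ∧ lipSemi (fun e : ↥E => T (e : X)) = lipSemi T := by
  have hnt : Nontrivial X := dp_nontrivial hX
  obtain ⟨C, hC⟩ := hT
  obtain ⟨A, hAdef⟩ : ∃ A : Set ℝ,
      A = {r : ℝ | ∃ x₁ x₂ : X, x₁ ≠ x₂ ∧ r = ‖T x₁ - T x₂‖ / ‖x₁ - x₂‖} := ⟨_, rfl⟩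
  have hAne : A.Nonempty := by
    obtain ⟨x, y, hxy⟩ := exists_pair_ne X
    refine ⟨‖T x - T y‖ / ‖x - y‖, ?_⟩
    rw [hAdef]
    exact ⟨x, y, hxy, rfl⟩
  have hAbdd : BddAbove A := by
    refine ⟨(C : ℝ), fun r hr => ?_⟩
    rw [hAdef] at hr
    obtain ⟨x₁, x₂, hne, rfl⟩ := hr
    have hpos : 0 < ‖x₁ - x₂‖ := by
      rw [norm_pos_iff, sub_ne_zero]; exact hne
    rw [div_le_iff₀ hpos]
    have := hC.dist_le_mul x₁ x₂
    rwa [dist_eq_norm, dist_eq_norm] at this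
  have hwit : ∀ n : ℕ, ∃ x₁ x₂ : X, x₁ ≠ x₂ ∧
      sSup A - ((n:ℝ)+1)⁻¹ < ‖T x₁ - T x₂‖ / ‖x₁ - x₂‖ := by
    intro n
    have hlt : sSup A - ((n:ℝ)+1)⁻¹ < sSup A := by
      have : (0:ℝ) < ((n:ℝ)+1)⁻¹ := by positivity
      linarith
    obtain ⟨r, hrA, hrgt⟩ := exists_lt_of_lt_csSup hAne hlt
    rw [hAdef] at hrA
    obtain ⟨x₁, x₂, hne, rfl⟩ := hrA
    exact ⟨x₁, x₂, hne, hrgt⟩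
  choose W1 W2 hWne hWgt using hwit
  have hstep : ∀ s : {p : Set X × Set X //
      p.1.Countable ∧ p.2.Countable ∧ p.2 ⊆ (Submodule.span 𝕜 p.1 : Set X)},
      ∃ s' : {p : Set X × Set X //
        p.1.Countable ∧ p.2.Countable ∧ p.2 ⊆ (Submodule.span 𝕜 p.1 : Set X)},
      DStep 𝕜 T s.1 s'.1 := by
    intro s
    obtain ⟨q, hq⟩ := exists_dstep hX T s.1 s.2.1 s.2.2.1 s.2.2.2
    exact ⟨⟨q, hq.cD, hq.cQ, hq.hQspan⟩, hq⟩
  choose nxt hnxt using hstep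
  obtain ⟨seq, hseq0, hseqS⟩ : ∃ seq : ℕ → {p : Set X × Set X //
      p.1.Countable ∧ p.2.Countable ∧ p.2 ⊆ (Submodule.span 𝕜 p.1 : Set X)},
      (seq 0).1 = (Set.range W1 ∪ Set.range W2, (∅ : Set X)) ∧
      ∀ n, DStep 𝕜 T (seq n).1 (seq (n+1)).1 := by
    refine ⟨fun n => nxt^[n] ⟨(Set.range W1 ∪ Set.range W2, ∅),
      (Set.countable_range W1).union (Set.countable_range W2), Set.countable_empty,
      Set.empty_subset _⟩, rfl, fun n => ?_⟩
    simp only [Function.iterate_succ_apply']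
    exact hnxt _
  have hDmono : Monotone (fun n => (seq n).1.1) := monotone_nat_of_le_succ fun n => (hseqS n).hD
  have hQmono : Monotone (fun n => (seq n).1.2) := monotone_nat_of_le_succ fun n => (hseqS n).hQ
  obtain ⟨M, hMdef⟩ : ∃ M : Submodule 𝕜 X, M = ⨆ n, Submodule.span 𝕜 ((seq n).1.1) := ⟨_, rfl⟩
  obtain ⟨E, hEdef⟩ : ∃ E : Submodule 𝕜 X, E = M.topologicalClosure := ⟨_, rfl⟩
  have hMcoe : (M : Set X) = ⋃ n, (Submodule.span 𝕜 ((seq n).1.1) : Set X) := by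
    rw [hMdef]
    exact Submodule.coe_iSup_of_chain ⟨fun n => Submodule.span 𝕜 ((seq n).1.1),
      fun m n h => Submodule.span_mono (hDmono h)⟩
  have hEcoe : (E : Set X) = closure (M : Set X) := by
    rw [hEdef]; exact M.topologicalClosure_coe
  have hEclosed : IsClosed (E : Set X) := by
    rw [hEdef]; exact M.isClosed_topologicalClosure
  have hME : (M : Set X) ⊆ (E : Set X) := by rw [hEcoe]; exact subset_closure
  obtain ⟨Qi, hQidef⟩ : ∃ Qi : Set X, Qi = ⋃ n, (seq n).1.2 := ⟨_, rfl⟩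
  have hQicnt : Qi.Countable := by
    rw [hQidef]; exact Set.countable_iUnion fun n => (seq n).2.2.1
  have hDE : ∀ n, (seq n).1.1 ⊆ (E : Set X) := by
    intro n y hy
    have h1 : y ∈ (Submodule.span 𝕜 ((seq n).1.1) : Set X) := Submodule.subset_span hy
    have h2 : Submodule.span 𝕜 ((seq n).1.1) ≤ M :=
      hMdef ▸ le_iSup (fun k => Submodule.span 𝕜 ((seq k).1.1)) n
    exact hME (h2 h1)
  have hQiE : Qi ⊆ (E : Set X) := by
    rw [hQidef]
    refine Set.iUnion_subset fun n y hy => ?_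
    have h1 := (seq n).2.2.2 hy
    have h2 : Submodule.span 𝕜 ((seq n).1.1) ≤ M :=
      hMdef ▸ le_iSup (fun k => Submodule.span 𝕜 ((seq k).1.1)) n
    exact hME (h2 h1)
  have hEQi : (E : Set X) ⊆ closure Qi := by
    rw [hEcoe]
    refine closure_minimal ?_ isClosed_closure
    rw [hMcoe]
    refine Set.iUnion_subset fun n => ?_
    refine ((hseqS n).hdense).trans (closure_mono ?_)
    rw [hQidef]
    exact Set.subset_iUnion (fun k => (seq k).1.2) (n+1)
  have hTinv : ∀ x ∈ E, T x ∈ E := by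
    intro x hx
    have hx1 : x ∈ closure Qi := hEQi hx
    have h2 : T x ∈ closure (T '' Qi) :=
      image_closure_subset_closure_image hC.continuous ⟨x, hx1, rfl⟩
    have h3 : T '' Qi ⊆ (E : Set X) := by
      rintro _ ⟨q, hq, rfl⟩
      rw [hQidef] at hq
      obtain ⟨n, hn⟩ := Set.mem_iUnion.mp hq
      exact hDE (n+1) ((hseqS n).hT q hn)
    exact closure_minimal h3 hEclosed h2
  have hD0 : (seq 0).1.1 = Set.range W1 ∪ Set.range W2 := by rw [hseq0]
  have hW1E : ∀ n, W1 n ∈ (E : Set X) := fun n =>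
    hDE 0 (by rw [hD0]; exact Set.mem_union_left _ ⟨n, rfl⟩)
  have hW2E : ∀ n, W2 n ∈ (E : Set X) := fun n =>
    hDE 0 (by rw [hD0]; exact Set.mem_union_right _ ⟨n, rfl⟩)
  haveI hEnt : Nontrivial ↥E := by
    refine ⟨⟨W1 0, hW1E 0⟩, ⟨W2 0, hW2E 0⟩, ?_⟩
    intro h
    exact hWne 0 (congrArg Subtype.val h)
  have Hconv : ∀ x : X, x ∈ E → ‖x‖ = 1 → ∀ ε : ℝ, 0 < ε → ∀ b : X, b ∈ E → ‖b‖ ≤ 1 →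
      b ∈ closure (convexHull ℝ ((E : Set X) ∩ dgSet x ε)) := by
    intro x hxE hx ε hε b hbE hb
    rw [Metric.mem_closure_iff]
    intro η hη
    obtain ⟨t, htdef⟩ : ∃ t : ℝ, t = min (η/4) 2⁻¹ := ⟨_, rfl⟩
    have htpos : 0 < t := htdef ▸ lt_min (by linarith) (by norm_num)
    have hth : t ≤ η/4 := htdef ▸ min_le_left _ _
    have ht2 : t ≤ 2⁻¹ := htdef ▸ min_le_right _ _
    have hbtE : (1-t) • b ∈ (E : Set X) := by
      rw [← algebraMap_smul 𝕜 (1-t) b]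
      exact Submodule.smul_mem E _ hbE
    have h1 : (1-t) • b ∈ closure Qi := hEQi hbtE
    rw [Metric.mem_closure_iff] at h1
    obtain ⟨b', hb'Q, hb'd⟩ := h1 t htpos
    rw [dist_eq_norm] at hb'd
    have hb'n : ‖b'‖ ≤ 1 := by
      have e1 : ‖(1-t) • b‖ ≤ 1 - t := by
        rw [norm_smul, Real.norm_eq_abs, abs_of_nonneg (by linarith : (0:ℝ) ≤ 1-t)]
        nlinarith [norm_nonneg b]
      have e2 : ‖b' - (1-t) • b‖ < t := by rw [norm_sub_rev]; exact hb'd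
      have e3 : ‖b'‖ ≤ ‖b' - (1-t) • b‖ + ‖(1-t) • b‖ := by
        have heq : b' = (b' - (1-t) • b) + (1-t) • b := by abel
        calc ‖b'‖ = ‖(b' - (1-t) • b) + (1-t) • b‖ := by rw [← heq]
        _ ≤ ‖b' - (1-t) • b‖ + ‖(1-t) • b‖ := norm_add_le _ _
      linarith
    have hbb' : ‖b - b'‖ ≤ η/2 := by
      have e1 : ‖b - (1-t) • b‖ ≤ t := by
        have heq : b - (1-t) • b = t • b := by
          rw [sub_smul, one_smul, sub_sub_cancel]
        rw [heq, norm_smul, Real.norm_eq_abs, abs_of_pos htpos]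
        nlinarith [norm_nonneg b]
      have e2 : ‖b - b'‖ ≤ ‖b - (1-t) • b‖ + ‖(1-t) • b - b'‖ := by
        have heq : b - b' = (b - (1-t) • b) + ((1-t) • b - b') := by abel
        rw [heq]; exact norm_add_le _ _
      linarith
    have hq1 : x ∈ closure Qi := hEQi hxE
    rw [Metric.mem_closure_iff] at hq1
    obtain ⟨ρ, hρdef⟩ : ∃ ρ : ℝ, ρ = min 4⁻¹ (ε/8) := ⟨_, rfl⟩
    have hρpos : 0 < ρ := hρdef ▸ lt_min (by norm_num) (by linarith)
    obtain ⟨q, hqQ, hqd⟩ := hq1 ρ hρpos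
    rw [dist_eq_norm] at hqd
    have hq0 : q ≠ 0 := by
      intro h
      rw [h, sub_zero, hx] at hqd
      have : ρ ≤ 4⁻¹ := hρdef ▸ min_le_left _ _
      linarith
    have hqx : ‖(‖q‖⁻¹ • q : X) - x‖ < ε/4 := by
      have h1 := normalize_close hq0 hx
      have h2 : ‖q - x‖ < ρ := by rw [norm_sub_rev] at hqd; exact hqd
      have h3 : ρ ≤ ε/8 := hρdef ▸ min_le_right _ _
      linarith
    obtain ⟨j, hj⟩ := exists_nat_one_div_lt (show (0:ℝ) < ε/2 by linarith)
    have hj' : ((j:ℝ)+1)⁻¹ < ε/2 := by rw [inv_eq_one_div]; exact hj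
    obtain ⟨m, hm⟩ := exists_nat_one_div_lt (show (0:ℝ) < η/2 by linarith)
    have hm' : ((m:ℝ)+1)⁻¹ < η/2 := by rw [inv_eq_one_div]; exact hm
    rw [hQidef] at hqQ hb'Q
    obtain ⟨n1, hn1⟩ := Set.mem_iUnion.mp hqQ
    obtain ⟨n2, hn2⟩ := Set.mem_iUnion.mp hb'Q
    obtain ⟨N, hN1, hN2⟩ : ∃ N, q ∈ (seq N).1.2 ∧ b' ∈ (seq N).1.2 :=
      ⟨max n1 n2, hQmono (le_max_left n1 n2) hn1, hQmono (le_max_right n1 n2) hn2⟩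
    obtain ⟨z, hz, hzd⟩ := (hseqS N).hconv q hN1 hq0 b' hN2 hb'n j m
    refine ⟨z, ?_, ?_⟩
    · refine convexHull_mono ?_ hz
      rintro y ⟨hy1, hy2, hy3⟩
      refine ⟨hDE (N+1) hy1, hy2, ?_⟩
      have h5 : ‖(‖q‖⁻¹ • q : X) + y‖ ≤ ‖x + y‖ + ‖(‖q‖⁻¹ • q : X) - x‖ := by
        have heq : (‖q‖⁻¹ • q : X) + y = (x + y) + ((‖q‖⁻¹ • q : X) - x) := by abel
        rw [heq]; exact norm_add_le _ _
      have h6 : 2 - ((j:ℝ)+1)⁻¹ < ‖(‖q‖⁻¹ • q : X) + y‖ := hy3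
      linarith
    · rw [dist_eq_norm]
      have h7 : ‖b - z‖ ≤ ‖b - b'‖ + ‖b' - z‖ := by
        have heq : b - z = (b - b') + (b' - z) := by abel
        rw [heq]; exact norm_add_le _ _
      linarith
  haveI hsc : IsScalarTower ℝ 𝕜 ↥E := ⟨fun r k y => Subtype.ext (smul_assoc r k (y : X))⟩
  have hDP : DaugavetProperty 𝕜 ↥E := dp_of_conv (conv_transfer E hEclosed Hconv)
  refine ⟨E, hEclosed, ⟨Qi, hQicnt, hEQi⟩, hDP, hTinv, ?_⟩
  obtain ⟨AE, hAEdef⟩ : ∃ AE : Set ℝ,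
      AE = {r : ℝ | ∃ e₁ e₂ : ↥E, e₁ ≠ e₂ ∧ r = ‖T ↑e₁ - T ↑e₂‖ / ‖e₁ - e₂‖} := ⟨_, rfl⟩
  have hgoal1 : lipSemi (fun e : ↥E => T (e : X)) = sSup AE := by rw [hAEdef]; rfl
  have hgoal2 : lipSemi T = sSup A := by rw [hAdef]; rfl
  rw [hgoal1, hgoal2]
  have hsetE : AE ⊆ A := by
    rw [hAEdef, hAdef]
    rintro r ⟨e₁, e₂, hne, rfl⟩
    exact ⟨↑e₁, ↑e₂, fun h => hne (Subtype.ext h), rfl⟩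
  have hAEne : AE.Nonempty := by
    rw [hAEdef]
    refine ⟨_, ⟨W1 0, hW1E 0⟩, ⟨W2 0, hW2E 0⟩, ?_, rfl⟩
    intro h
    exact hWne 0 (congrArg Subtype.val h)
  apply le_antisymm
  · exact csSup_le_csSup hAbdd hAEne hsetE
  · refine le_of_forall_pos_le_add fun δ hδ => ?_
    obtain ⟨n, hn⟩ := exists_nat_one_div_lt hδ
    have hn' : ((n:ℝ)+1)⁻¹ < δ := by rw [inv_eq_one_div]; exact hn
    have hmem : (‖T (W1 n) - T (W2 n)‖ / ‖W1 n - W2 n‖) ∈ AE := by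
      rw [hAEdef]
      refine ⟨⟨W1 n, hW1E n⟩, ⟨W2 n, hW2E n⟩, ?_, rfl⟩
      intro h
      exact hWne n (congrArg Subtype.val h)
    have hle : ‖T (W1 n) - T (W2 n)‖ / ‖W1 n - W2 n‖ ≤ sSup AE :=
      le_csSup (hAbdd.mono hsetE) hmem
    have hgt := hWgt n
    linarith
end
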